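/- arXiv:1405.2603 — 3 statements merged into one kernel-verified Lean document; each statement's English description precedes it below -/
import Mathlib

section
/- Let C be a finite set with a descent statistic Des : C → subsets of {1,…,n−1} and involutions φ_i (2 ≤ i ≤ n−1) satisfying conditions (i) and (ii.b), and let G_C be the colored graph on C with an edge of color i between c and φ_i(c) whenever φ_i(c) ≠ c. Then the colored edges of any connected component of G_C determine the descent sets of its vertices up to a single global replacement of every descent set by its complement in {1,…,n−1}: any two descent statistics compatible with conditions (i) and (ii.b) and the same colored edges on that component either agree on the component or are complements of each other on every vertex of the component. -/
open MvPolynomial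

noncomputable section

/-! ### Permutations of ℕ with finite support (the group `S_∞`, 0-indexed) -/

/-- A permutation of `ℕ` moves only finitely many points, i.e. lies in `S_∞`. -/
def PermFinSupp (w : Equiv.Perm ℕ) : Prop := {i : ℕ | w i ≠ i}.Finite

/-- The length (number of inversions) of a permutation. -/
def permLength (w : Equiv.Perm ℕ) : ℕ :=
  Nat.card {p : ℕ × ℕ // p.1 < p.2 ∧ w p.2 < w p.1}

def w0fun (n : ℕ) : ℕ → ℕ := fun i => if i < n then n - 1 - i else i

lemma w0fun_involutive (n : ℕ) : Function.Involutive (w0fun n) := by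
  intro i
  unfold w0fun
  by_cases h : i < n
  · have h2 : n - 1 - i < n := by omega
    rw [if_pos h, if_pos h2]
    omega
  · rw [if_neg h, if_neg h]

/-- The longest element of `S_n` inside `S_∞` (0-indexed: `i ↦ n-1-i` for `i < n`). -/
def w0 (n : ℕ) : Equiv.Perm ℕ := (w0fun_involutive n).toPerm

/-- A family of polynomials indexed by permutations satisfying the defining
divided-difference recursion of the Schubert polynomials:
`𝔖_{w₀(n)} = z_1^{n-1} ⋯ z_{n-1}` (variables 0-indexed: `X i = z_{i+1}`) and
`(z_i - z_{i+1}) · 𝔖_{w sᵢ} = 𝔖_w - sᵢ·𝔖_w` whenever `ℓ(w) = ℓ(w sᵢ) + 1`. -/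
def IsSchubertFamily (S : Equiv.Perm ℕ → MvPolynomial ℕ ℤ) : Prop :=
  (∀ n : ℕ, S (w0 n) = ∏ i ∈ Finset.range n, (X i : MvPolynomial ℕ ℤ) ^ (n - 1 - i)) ∧
  ∀ (w : Equiv.Perm ℕ) (i : ℕ),
    permLength w = permLength (w * Equiv.swap i (i + 1)) + 1 →
    (X i - X (i + 1)) * S (w * Equiv.swap i (i + 1)) =
      S w - rename (Equiv.swap i (i + 1)) (S w)

/-! ### Schur polynomials in finitely many variables -/

/-- A filling of the cells of `μ` with values in `Fin k` is semistandard if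
rows weakly increase and columns strictly increase. -/
def IsSsytFilling (μ : YoungDiagram) (k : ℕ) (T : {c // c ∈ μ.cells} → Fin k) : Prop :=
  (∀ c d : {c // c ∈ μ.cells}, c.1.1 = d.1.1 → c.1.2 ≤ d.1.2 → T c ≤ T d) ∧
  (∀ c d : {c // c ∈ μ.cells}, c.1.2 = d.1.2 → c.1.1 < d.1.1 → T c < T d)

/-- The Schur polynomial `s_μ(z_1,…,z_k)` (variables 0-indexed), as the generating
function of semistandard Young tableaux of shape `μ` with entries in `{1,…,k}`. -/
def schurPoly (μ : YoungDiagram) (k : ℕ) : MvPolynomial ℕ ℤ :=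
  ∑ᶠ T ∈ {T : {c // c ∈ μ.cells} → Fin k | IsSsytFilling μ k T},
    ∏ c : {c // c ∈ μ.cells}, (X ((T c : ℕ)) : MvPolynomial ℕ ℤ)

/-- The complete homogeneous polynomial `h_m(z_1,…,z_k)`: the sum of all monomials
of degree `m` in the (0-indexed) variables `X 0, …, X (k-1)`. -/
def hPoly (m k : ℕ) : MvPolynomial ℕ ℤ :=
  ∑ s ∈ (Finset.univ : Finset (Fin k)).sym m,
    (Multiset.map (fun i : Fin k => (X (i : ℕ) : MvPolynomial ℕ ℤ)) ↑s).prod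


/-! ### Quasisymmetric functions and Schur functions as formal power series -/

/-- The exponent vector of the monomial `x_{f 0} ⋯ x_{f (n-1)}`. -/
def seqMonomial {n : ℕ} (f : Fin n → ℕ) : ℕ →₀ ℕ := ∑ j, Finsupp.single (f j) 1

/-- Gessel's fundamental quasisymmetric function `Q_D` of degree `n` for
`D ⊆ {1,…,n-1}`, as a formal power series in the variables `x_0, x_1, …`:
the coefficient of `x^α` counts (there is at most one) weakly increasing
sequences `f : Fin n → ℕ` which strictly increase from position `i` to `i+1`
(1-indexed) for each `i ∈ D`, with content `α`. -/
def fundamentalQSym (n : ℕ) (D : Finset ℕ) : MvPowerSeries ℕ ℤ :=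
  fun α => (Nat.card {f : Fin n → ℕ //
    Monotone f ∧
    (∀ i : ℕ, i ∈ D → 0 < i → ∀ h : i < n, f ⟨i - 1, by omega⟩ < f ⟨i, h⟩) ∧
    seqMonomial f = α} : ℤ)

/-- The content (exponent vector) of a semistandard Young tableau. -/
def ssytMonomial (μ : YoungDiagram) (T : SemistandardYoungTableau μ) : ℕ →₀ ℕ :=
  ∑ c ∈ μ.cells, Finsupp.single (T c.1 c.2) 1

/-- The Schur function `s_μ` as a formal power series in `x_0, x_1, …`:
the coefficient of `x^α` is the number of semistandard Young tableaux of
shape `μ` and content `α`. -/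
def schurFunction (μ : YoungDiagram) : MvPowerSeries ℕ ℤ :=
  fun α => (Nat.card {T : SemistandardYoungTableau μ // ssytMonomial μ T = α} : ℤ)

/-- A formal power series is a symmetric function if its coefficients are invariant
under every permutation of the variables. -/
def PSIsSymmetric (F : MvPowerSeries ℕ ℤ) : Prop :=
  ∀ (g : Equiv.Perm ℕ) (α : ℕ →₀ ℕ),
    MvPowerSeries.coeff (Finsupp.equivMapDomain g α) F = MvPowerSeries.coeff α F

/-- A formal power series is a nonnegative integer combination of Schur functions. -/
def SchurNonneg (F : MvPowerSeries ℕ ℤ) : Prop :=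
  ∃ m : YoungDiagram → ℕ, (Function.support m).Finite ∧
    F = ∑ᶠ μ : YoungDiagram, (m μ : ℤ) • schurFunction μ

/-! ### Standard Young tableaux -/

/-- A semistandard Young tableau is standard if each value `0,…,|μ|-1` occurs in
exactly one cell (0-indexed values; with distinct entries rows are forced to
strictly increase). -/
def IsStandardSyt (μ : YoungDiagram) (T : SemistandardYoungTableau μ) : Prop :=
  ∀ m : ℕ, m < μ.card → ∃! c : ℕ × ℕ, c ∈ μ.cells ∧ T c.1 c.2 = m

/-- `f^μ`: the number of standard Young tableaux of shape `μ`. -/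
def sytCount (μ : YoungDiagram) : ℕ :=
  Nat.card {T : SemistandardYoungTableau μ // IsStandardSyt μ T}

open Classical in
/-- The descent set of a standard Young tableau: those `i ∈ {1,…,n-1}` (1-indexed
values) such that the value `i+1` lies in a higher row than `i`; with 0-indexed
entries, the entry `i` lies in a higher row than the entry `i-1`. -/
def sytDes (μ : YoungDiagram) (T : SemistandardYoungTableau μ) : Finset ℕ :=
  (Finset.Ico 1 μ.card).filter fun i =>
    ∃ c ∈ μ.cells, ∃ d ∈ μ.cells, T c.1 c.2 = i - 1 ∧ T d.1 d.2 = i ∧ c.1 < d.1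


/-! ### The Grassmannian-Bruhat order and the k-Bruhat order -/

/-- The Grassmannian-Bruhat order `η ⪯ ζ` on permutations of `ℕ`. -/
def GBle (η ζ : Equiv.Perm ℕ) : Prop :=
  (∀ a : ℕ, a < ζ a → a ≤ η a ∧ η a ≤ ζ a) ∧
  (∀ b : ℕ, ζ b < b → η b ≤ b ∧ ζ b ≤ η b) ∧
  (∀ a b : ℕ, a < b → ((a < ζ a ∧ b < ζ b) ∨ (ζ a < a ∧ ζ b < b)) →
    ζ a < ζ b → η a < η b)

/-- Covers in the Grassmannian-Bruhat order. -/
def GBCovBy (η ζ : Equiv.Perm ℕ) : Prop :=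
  GBle η ζ ∧ η ≠ ζ ∧ ∀ ξ, GBle η ξ → GBle ξ ζ → ξ = η ∨ ξ = ζ

/-- The interval `[η, ζ]` in the Grassmannian-Bruhat order. -/
def GBInterval (η ζ : Equiv.Perm ℕ) : Set (Equiv.Perm ℕ) := {ξ | GBle η ξ ∧ GBle ξ ζ}

/-- Successively left-multiply `u` by the transpositions recorded in the list `c`:
a list `[(a₁,b₁),…,(aₙ,bₙ)]` yields `t_{aₙbₙ} ⋯ t_{a₁b₁} u`. -/
def leftMulProd (u : Equiv.Perm ℕ) (c : List (ℕ × ℕ)) : Equiv.Perm ℕ :=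
  c.foldl (fun g p => Equiv.swap p.1 p.2 * g) u

/-- A list of transpositions `(t_{a₁b₁},…,t_{aₙbₙ})` (with `aᵢ < bᵢ`) records a
saturated chain from `e` in the Grassmannian-Bruhat order: the partial products
`t_{aᵢbᵢ} ⋯ t_{a₁b₁}` form successive covers. -/
def IsGBChain (c : List (ℕ × ℕ)) : Prop :=
  (∀ p ∈ c, p.1 < p.2) ∧
  ∀ i : ℕ, i < c.length →
    GBCovBy (leftMulProd 1 (c.take i)) (leftMulProd 1 (c.take (i + 1)))

/-- A saturated chain of the interval `[e,ζ]` in the Grassmannian-Bruhat order. -/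
def GBChainTo (ζ : Equiv.Perm ℕ) (c : List (ℕ × ℕ)) : Prop :=
  IsGBChain c ∧ leftMulProd 1 c = ζ

/-- The descent set of a chain recorded by a list of transpositions; its label word
is `b₁,…,bₙ` (the larger entries) and `i ∈ Des` (for `1 ≤ i ≤ n-1`) iff `bᵢ > bᵢ₊₁`. -/
def chainDes (c : List (ℕ × ℕ)) : Finset ℕ :=
  (Finset.Ico 1 c.length).filter fun i => (c.getD i (0, 0)).2 < (c.getD (i - 1) (0, 0)).2

/-- Covers in the `k`-Bruhat order (0-indexed positions: the paper's `i ≤ k < j`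
becomes `i < k ≤ j`): `w = u t_{ij}` with `ℓ(w) = ℓ(u) + 1`. -/
def kCovBy (k : ℕ) (u w : Equiv.Perm ℕ) : Prop :=
  permLength w = permLength u + 1 ∧
  ∃ i j : ℕ, i < k ∧ k ≤ j ∧ w = u * Equiv.swap i j

/-- The `k`-Bruhat order `≤ₖ`. -/
def kle (k : ℕ) : Equiv.Perm ℕ → Equiv.Perm ℕ → Prop :=
  Relation.ReflTransGen (kCovBy k)

/-- The interval `[u,w]ₖ` in the `k`-Bruhat order. -/
def kInterval (k : ℕ) (u w : Equiv.Perm ℕ) : Set (Equiv.Perm ℕ) :=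
  {x | kle k u x ∧ kle k x w}

/-- A list of transpositions `(a,b)` (with `a < b`, `b` the label) records a
saturated chain in the `k`-Bruhat order starting at `u`: each step is a cover
`η ⋖ₖ t_{ab} η`. -/
def IsKChainFrom (k : ℕ) (u : Equiv.Perm ℕ) (c : List (ℕ × ℕ)) : Prop :=
  (∀ p ∈ c, p.1 < p.2) ∧
  ∀ i : ℕ, i < c.length →
    kCovBy k (leftMulProd u (c.take i)) (leftMulProd u (c.take (i + 1)))

/-- Covers of a subset `s` with respect to a relation `le`. -/
def CovWithin {α : Type*} (le : α → α → Prop) (s : Set α) (x y : α) : Prop :=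
  x ∈ s ∧ y ∈ s ∧ le x y ∧ x ≠ y ∧ ∀ z ∈ s, le x z → le z y → z = x ∨ z = y

/-- The specification of the relabelling map `ι_I` induced by the strictly monotone
enumeration `g` of `I`: `ι_I(ζ)` fixes points outside the range of `g` and sends
`g m` to `g (ζ m)`. -/
def IotaSpec (g : ℕ → ℕ) (ζ ξ : Equiv.Perm ℕ) : Prop :=
  (∀ j : ℕ, (∀ m : ℕ, g m ≠ j) → ξ j = j) ∧ ∀ m : ℕ, ξ (g m) = g (ζ m)


/-! ### Substitutions on chains, forbidden configurations, and the rules A, B, C -/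

/-- Substitution (i): `(t_{βγ},t_{γδ},t_{αγ}) ↔ (t_{βδ},t_{αβ},t_{βγ})` for `α<β<γ<δ`. -/
def subI (s t : List (ℕ × ℕ)) : Prop :=
  ∃ α β γ δ : ℕ, α < β ∧ β < γ ∧ γ < δ ∧
    ((s = [(β,γ),(γ,δ),(α,γ)] ∧ t = [(β,δ),(α,β),(β,γ)]) ∨
     (s = [(β,δ),(α,β),(β,γ)] ∧ t = [(β,γ),(γ,δ),(α,γ)]))

/-- Substitution (ii): `(t_{αγ},t_{γδ},t_{βγ}) ↔ (t_{βγ},t_{αβ},t_{βδ})` for `α<β<γ<δ`. -/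
def subII (s t : List (ℕ × ℕ)) : Prop :=
  ∃ α β γ δ : ℕ, α < β ∧ β < γ ∧ γ < δ ∧
    ((s = [(α,γ),(γ,δ),(β,γ)] ∧ t = [(β,γ),(α,β),(β,δ)]) ∨
     (s = [(β,γ),(α,β),(β,δ)] ∧ t = [(α,γ),(γ,δ),(β,γ)]))

/-- Substitution (iii): `(t_{αβ},t_{γδ}) ↔ (t_{γδ},t_{αβ})` if `β<γ` or `α<γ<δ<β`. -/
def subIII (s t : List (ℕ × ℕ)) : Prop :=
  ∃ x y : ℕ × ℕ, (x.2 < y.1 ∨ (x.1 < y.1 ∧ y.2 < x.2)) ∧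
    ((s = [x, y] ∧ t = [y, x]) ∨ (s = [y, x] ∧ t = [x, y]))

/-- One substitution (i), (ii) or (iii) applied to consecutive entries of a list. -/
def SubstStep (c d : List (ℕ × ℕ)) : Prop :=
  ∃ pre post s t, c = pre ++ s ++ post ∧ d = pre ++ t ++ post ∧
    (subI s t ∨ subII s t ∨ subIII s t)

/-- `d` is obtained from `c` by exactly `m` substitutions. -/
def reachIn : ℕ → List (ℕ × ℕ) → List (ℕ × ℕ) → Prop
  | 0, c, d => c = d
  | m + 1, c, d => ∃ e, SubstStep c e ∧ reachIn m e d

/-- The minimal number of substitutions needed to transform `c` into `d`. -/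
def substDist (c d : List (ℕ × ℕ)) : ℕ := sInf {m | reachIn m c d}

/-- Forbidden configuration (iv): consecutive `t_{αγ},t_{βδ}` or `t_{βδ},t_{αγ}`
with `α ≤ β < γ ≤ δ`. -/
def badIV (c : List (ℕ × ℕ)) : Prop :=
  ∃ pre post : List (ℕ × ℕ), ∃ α β γ δ : ℕ, α ≤ β ∧ β < γ ∧ γ ≤ δ ∧
    (c = pre ++ [(α,γ),(β,δ)] ++ post ∨ c = pre ++ [(β,δ),(α,γ)] ++ post)

/-- Forbidden configuration (v): consecutive `t_{βγ},t_{αβ},t_{βγ}` or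
`t_{αβ},t_{βγ},t_{αβ}` with `α < β < γ`. -/
def badV (c : List (ℕ × ℕ)) : Prop :=
  ∃ pre post : List (ℕ × ℕ), ∃ α β γ : ℕ, α < β ∧ β < γ ∧
    (c = pre ++ [(β,γ),(α,β),(β,γ)] ++ post ∨ c = pre ++ [(α,β),(β,γ),(α,β)] ++ post)

/-- Two transpositions (recorded as pairs with increasing entries) are disjoint:
their supports are disjoint intervals or nested intervals (noncrossing, nonintersecting). -/
def disjointT (x y : ℕ × ℕ) : Prop :=
  x.2 < y.1 ∨ y.2 < x.1 ∨ (x.1 < y.1 ∧ y.2 < x.2) ∨ (y.1 < x.1 ∧ x.2 < y.2)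

/-- Rule (A): `(t_{βγ},t_{αβ},t_{βδ}) ↔ (t_{αγ},t_{γδ},t_{βγ})` and
`(t_{βδ},t_{αβ},t_{βγ}) ↔ (t_{βγ},t_{γδ},t_{αγ})` for `α<β<γ<δ`. -/
def ruleA (s t : List (ℕ × ℕ)) : Prop :=
  ∃ α β γ δ : ℕ, α < β ∧ β < γ ∧ γ < δ ∧
    ((s = [(β,γ),(α,β),(β,δ)] ∧ t = [(α,γ),(γ,δ),(β,γ)]) ∨
     (s = [(α,γ),(γ,δ),(β,γ)] ∧ t = [(β,γ),(α,β),(β,δ)]) ∨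
     (s = [(β,δ),(α,β),(β,γ)] ∧ t = [(β,γ),(γ,δ),(α,γ)]) ∨
     (s = [(β,γ),(γ,δ),(α,γ)] ∧ t = [(β,δ),(α,β),(β,γ)]))

/-- Rule (B): `(t_{bβ},t_{aα},t_{cγ}) ↔ (t_{bβ},t_{cγ},t_{aα})` and
`(t_{cγ},t_{aα},t_{bβ}) ↔ (t_{aα},t_{cγ},t_{bβ})` where the labels satisfy
`α < β < γ` and `t_{aα}`, `t_{cγ}` are disjoint. -/
def ruleB (s t : List (ℕ × ℕ)) : Prop :=
  ∃ x y z : ℕ × ℕ, y.2 < x.2 ∧ x.2 < z.2 ∧ disjointT y z ∧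
    ((s = [x, y, z] ∧ t = [x, z, y]) ∨ (s = [x, z, y] ∧ t = [x, y, z]) ∨
     (s = [z, y, x] ∧ t = [y, z, x]) ∨ (s = [y, z, x] ∧ t = [z, y, x]))

/-- Rule (C): `(t_{pq},t_{αβ},t_{βγ}) ↔ (t_{αβ},t_{βγ},t_{pq})` and
`(t_{βγ},t_{αβ},t_{pq}) ↔ (t_{pq},t_{βγ},t_{αβ})` for `α<β<p<q<γ`. -/
def ruleC (s t : List (ℕ × ℕ)) : Prop :=
  ∃ α β γ p q : ℕ, α < β ∧ β < p ∧ p < q ∧ q < γ ∧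
    ((s = [(p,q),(α,β),(β,γ)] ∧ t = [(α,β),(β,γ),(p,q)]) ∨
     (s = [(α,β),(β,γ),(p,q)] ∧ t = [(p,q),(α,β),(β,γ)]) ∨
     (s = [(β,γ),(α,β),(p,q)] ∧ t = [(p,q),(β,γ),(α,β)]) ∨
     (s = [(p,q),(β,γ),(α,β)] ∧ t = [(β,γ),(α,β),(p,q)]))

/-- One of the rules (A), (B), (C). -/
def ruleABC (s t : List (ℕ × ℕ)) : Prop := ruleA s t ∨ ruleB s t ∨ ruleC s t

/-! ### Dual equivalence (Assaf) -/

section DualEquivalence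

variable {C : Type*}

/-- The family `φ` of involutions, guarded to act only in the range `2 ≤ i ≤ n-1`
(outside of this range it is regarded as the identity). -/
def phiG (n : ℕ) (φ : ℕ → C → C) (i : ℕ) : C → C :=
  if 2 ≤ i ∧ i ≤ n - 1 then φ i else id

/-- The restricted descent set `Des_{(i,j)}(c)`: intersect `Des c` with
`[i-1, j]` and subtract `i-2` from each element. -/
def resDes (Des : C → Finset ℕ) (i j : ℕ) (c : C) : Finset ℕ :=
  (Des c ∩ Finset.Icc (i - 1) j).image fun x => x - (i - 2)

/-- The `∼_{(i,j)}`-equivalence class of `c`: the equivalence generated by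
`a ∼ φ_k a` for `i ≤ k ≤ j`. -/
def deClass (n : ℕ) (φ : ℕ → C → C) (i j : ℕ) (c : C) : Set C :=
  {a | Relation.EqvGen (fun a b => ∃ m, i ≤ m ∧ m ≤ j ∧ b = phiG n φ m a) c a}

/-- Condition (i): `φ_i` fixes `c` exactly when `c` has descents at both of
`i-1, i` or at neither. -/
def CondI (n : ℕ) (Des : C → Finset ℕ) (φ : ℕ → C → C) : Prop :=
  ∀ i : ℕ, 2 ≤ i → i ≤ n - 1 → ∀ c : C,
    (phiG n φ i c = c ↔
      (Des c ∩ {i - 1, i} = (∅ : Finset ℕ) ∨ Des c ∩ {i - 1, i} = {i - 1, i}))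

/-- Condition (ii.b): when `φ_i c ≠ c`, for each `j ∈ {i-1, i}` exactly one of
`c`, `φ_i c` has a descent at `j`. -/
def CondIIb (n : ℕ) (Des : C → Finset ℕ) (φ : ℕ → C → C) : Prop :=
  ∀ i : ℕ, 2 ≤ i → i ≤ n - 1 → ∀ c : C, phiG n φ i c ≠ c →
    ((i - 1 ∈ Des c ↔ i - 1 ∉ Des (phiG n φ i c)) ∧
     (i ∈ Des c ↔ i ∉ Des (phiG n φ i c)))

/-- Conditions (involutivity), (i), (ii.a)–(ii.d), (iii) of (strong) dual equivalence. -/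
def DEConds123 (n : ℕ) (Des : C → Finset ℕ) (φ : ℕ → C → C) : Prop :=
  (∀ i : ℕ, 2 ≤ i → i ≤ n - 1 → ∀ c : C, phiG n φ i (phiG n φ i c) = c) ∧
  CondI n Des φ ∧
  (∀ i : ℕ, 2 ≤ i → i ≤ n - 1 → ∀ c : C, phiG n φ i c ≠ c →
    ∀ j, j ∉ ({i - 2, i - 1, i, i + 1} : Finset ℕ) →
      (j ∈ Des c ↔ j ∈ Des (phiG n φ i c))) ∧
  CondIIb n Des φ ∧
  (∀ i : ℕ, 2 ≤ i → i ≤ n - 1 → ∀ c : C, phiG n φ i c ≠ c →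
    ((i - 2 ∈ Des c ↔ i - 2 ∉ Des (phiG n φ i c)) → phiG n φ (i - 1) c ≠ c)) ∧
  (∀ i : ℕ, 2 ≤ i → i ≤ n - 1 → ∀ c : C, phiG n φ i c ≠ c →
    ((i + 1 ∈ Des c ↔ i + 1 ∉ Des (phiG n φ i c)) → phiG n φ (i + 1) c ≠ c)) ∧
  (∀ i j : ℕ, i + 3 ≤ j ∨ j + 3 ≤ i → ∀ c : C,
    phiG n φ i (phiG n φ j c) = phiG n φ j (phiG n φ i c))

/-- The quasisymmetric generating function of the restricted class `[c]_{(i,j)}`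
with the restricted descent statistic `Des_{(i,j)}`. -/
def restrictedGF (n : ℕ) (Des : C → Finset ℕ) (φ : ℕ → C → C) (i j : ℕ) (c : C) :
    MvPowerSeries ℕ ℤ :=
  ∑ᶠ a ∈ deClass n φ i j c, fundamentalQSym (j - i + 3) (resDes Des i j a)

/-- A flat `i`-chain `c₁,…,c_{2r}` (recorded as a list, 0-indexed). -/
def IsFlatChain (n : ℕ) (φ : ℕ → C → C) (i r : ℕ) (L : List C) : Prop :=
  L.length = 2 * r ∧ L.Nodup ∧
  (∀ c ∈ L, phiG n φ (i - 2) c ≠ c ∧ phiG n φ i c ≠ c) ∧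
  (∀ j : ℕ, 1 ≤ j → j ≤ r - 1 → ∀ h : 2 * j < L.length,
    phiG n φ (i - 1) (L.get ⟨2 * j, h⟩) = L.get ⟨2 * j, h⟩) ∧
  (∀ j : ℕ, 1 ≤ j → j ≤ r → ∀ (h1 : 2 * j - 2 < L.length) (h2 : 2 * j - 1 < L.length),
    phiG n φ i (L.get ⟨2 * j - 2, h1⟩) = L.get ⟨2 * j - 1, h2⟩) ∧
  (∀ j : ℕ, 1 ≤ j → j ≤ r - 1 → ∀ (h1 : 2 * j - 1 < L.length) (h2 : 2 * j < L.length),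
    ∃ t : ℕ, L.get ⟨2 * j, h2⟩ =
      (phiG n φ (i - 2) ∘ phiG n φ (i - 1))^[t] (phiG n φ (i - 2) (L.get ⟨2 * j - 1, h1⟩)))

/-- Condition (iv.c) on flat `i`-chains. -/
def CondIVc (n : ℕ) (φ : ℕ → C → C) : Prop :=
  ∀ i r : ℕ, 3 < i → i < n - 1 → ∀ L : List C, IsFlatChain n φ i r L →
    ∀ j : ℕ, 1 < j → j < r →
    ∀ (h1 : 2 * j - 2 < L.length) (h2 : 2 * j - 1 < L.length),
    phiG n φ (i + 1) (L.get ⟨2 * j - 2, h1⟩) ≠ L.get ⟨2 * j - 2, h1⟩ →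
    phiG n φ (i + 1) (L.get ⟨2 * j - 1, h2⟩) ≠ L.get ⟨2 * j - 1, h2⟩ →
    ((∀ m : ℕ, ∀ hm : m < L.length, m < 2 * j →
        phiG n φ (i + 1) (L.get ⟨m, hm⟩) ≠ L.get ⟨m, hm⟩) ∨
     (∀ m : ℕ, ∀ hm : m < L.length, 2 * j - 2 ≤ m →
        phiG n φ (i + 1) (L.get ⟨m, hm⟩) ≠ L.get ⟨m, hm⟩))

/-- A dual equivalence for `(C, Des)` (Definition 1.6 of Assaf–Bergeron–Sottile):
conditions (i), (ii), (iii) together with (iv.a), (iv.b), and (iv.c) with its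
reversal (indices replaced by `n+1-i`). -/
def IsDualEquivalence (n : ℕ) (Des : C → Finset ℕ) (φ : ℕ → C → C) : Prop :=
  DEConds123 n Des φ ∧
  (∀ i j : ℕ, 2 ≤ i → i < j → j ≤ i + 2 → j ≤ n - 1 → ∀ c : C,
    PSIsSymmetric (restrictedGF n Des φ i j c) ∧ SchurNonneg (restrictedGF n Des φ i j c)) ∧
  (∀ i : ℕ, 3 ≤ i → i ≤ n - 1 → ∀ c : C, phiG n φ i c ≠ c →
    phiG n φ (i - 1) c ≠ c → phiG n φ (i - 1) (phiG n φ i c) ≠ phiG n φ i c →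
    phiG n φ (i + 1) c ≠ c → phiG n φ (i + 1) (phiG n φ i c) ≠ phiG n φ i c →
    restrictedGF n Des φ (i - 1) i c = restrictedGF n Des φ i (i + 1) c) ∧
  CondIVc n φ ∧
  CondIVc n (fun i => phiG n φ (n + 1 - i))

/-- A strong dual equivalence for `(C, Des)`: conditions (i), (ii), (iii)
together with condition (iv). -/
def IsStrongDualEquivalence (n : ℕ) (Des : C → Finset ℕ) (φ : ℕ → C → C) : Prop :=
  DEConds123 n Des φ ∧
  ∀ i j : ℕ, 2 ≤ i → i < j → j ≤ i + 3 → j ≤ n - 1 → ∀ c b : C,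
    (∃ l : List ℕ, l ≠ [] ∧ (∀ x ∈ l, i ≤ x ∧ x ≤ j) ∧
      b = l.foldl (fun a x => phiG n φ x a) c) →
    ∃ l : List ℕ, l ≠ [] ∧ (∀ x ∈ l, i ≤ x ∧ x ≤ j) ∧ l.count j ≤ 1 ∧
      b = l.foldl (fun a x => phiG n φ x a) c

end DualEquivalence


lemma inter_pair_iff_aux (s : Finset ℕ) (a b : ℕ) (hab : a ≠ b) :
    (s ∩ {a, b} = (∅ : Finset ℕ) ∨ s ∩ {a, b} = {a, b}) ↔ (a ∈ s ↔ b ∈ s) := by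
  constructor
  · rintro (h | h)
    · have ha : a ∉ s ∩ ({a, b} : Finset ℕ) := by simp [h]
      have hb : b ∉ s ∩ ({a, b} : Finset ℕ) := by simp [h]
      simp only [Finset.mem_inter, Finset.mem_insert, Finset.mem_singleton] at ha hb
      tauto
    · have ha : a ∈ s ∩ ({a, b} : Finset ℕ) := by rw [h]; simp
      have hb : b ∈ s ∩ ({a, b} : Finset ℕ) := by rw [h]; simp
      simp only [Finset.mem_inter] at ha hb
      tauto
  · intro h
    by_cases ha : a ∈ s
    · right
      have hb : b ∈ s := h.mp ha
      ext x
      simp only [Finset.mem_inter, Finset.mem_insert, Finset.mem_singleton]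
      constructor
      · tauto
      · rintro (rfl | rfl) <;> simp [ha, hb]
    · left
      have hb : b ∉ s := fun hb => ha (h.mpr hb)
      ext x
      simp only [Finset.mem_inter, Finset.mem_insert, Finset.mem_singleton,
        Finset.notMem_empty, iff_false, not_and]
      rintro hx (rfl | rfl) <;> tauto

set_option maxHeartbeats 1000000 in
/-- For a finite set `C` with a descent statistic and involutions
satisfying conditions (i) and (ii.b), the colored edges of a connected component of
the associated graph determine the descent sets of its vertices up to a single global
complementation in `{1,…,n-1}`: two descent statistics compatible with the same
involutions either agree on the whole component or are complementary on the whole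
component. -/
theorem descents_determined_up_to_complement
    {C : Type*} [Finite C] (n : ℕ) (Des₁ Des₂ : C → Finset ℕ)
    (hD₁ : ∀ c, Des₁ c ⊆ Finset.Ico 1 n) (hD₂ : ∀ c, Des₂ c ⊆ Finset.Ico 1 n)
    (φ : ℕ → C → C)
    (h₁i : CondI n Des₁ φ) (h₁b : CondIIb n Des₁ φ)
    (h₂i : CondI n Des₂ φ) (h₂b : CondIIb n Des₂ φ)
    (c₀ : C) :
    (∀ c : C, Relation.EqvGen
        (fun a b => ∃ i, 2 ≤ i ∧ i ≤ n - 1 ∧ b = φ i a ∧ φ i a ≠ a) c₀ c →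
        Des₁ c = Des₂ c) ∨
    (∀ c : C, Relation.EqvGen
        (fun a b => ∃ i, 2 ≤ i ∧ i ≤ n - 1 ∧ b = φ i a ∧ φ i a ≠ a) c₀ c →
        Des₂ c = Finset.Ico 1 n \ Des₁ c) := by
  classical
  -- From condition (i): membership at i-1 and i agree in Des c iff φ_i fixes c.
  have key : ∀ (Des : C → Finset ℕ), CondI n Des φ → ∀ c : C, ∀ i : ℕ, 2 ≤ i → i ≤ n - 1 →
      ((i - 1 ∈ Des c ↔ i ∈ Des c) ↔ phiG n φ i c = c) := by
    intro Des hI c i h2 hn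
    rw [hI i h2 hn c]
    exact (inter_pair_iff_aux (Des c) (i - 1) i (by omega)).symm
  have step : ∀ c : C, ∀ j : ℕ, 1 ≤ j → j + 1 < n →
      ((j ∈ Des₁ c ↔ j ∈ Des₂ c) ↔ (j + 1 ∈ Des₁ c ↔ j + 1 ∈ Des₂ c)) := by
    intro c j h1 hn
    have k1 := key Des₁ h₁i c (j + 1) (by omega) (by omega)
    have k2 := key Des₂ h₂i c (j + 1) (by omega) (by omega)
    simp only [Nat.add_sub_cancel] at k1 k2
    tauto
  have hIa : ∀ c : C, ∀ j : ℕ, 1 ≤ j → j < n →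
      ((j ∈ Des₁ c ↔ j ∈ Des₂ c) ↔ (1 ∈ Des₁ c ↔ 1 ∈ Des₂ c)) := by
    intro c j
    induction j with
    | zero => intro h; omega
    | succ k ih =>
      intro _ hn
      rcases Nat.eq_zero_or_pos k with rfl | hk
      · tauto
      · have h1 := step c k hk hn
        have h2 := ih hk (by omega)
        tauto
  -- Pointwise: Des₂ c is either Des₁ c or its complement, for every c.
  have claim1 : ∀ c : C, Des₂ c = Des₁ c ∨ Des₂ c = Finset.Ico 1 n \ Des₁ c := by
    intro c
    by_cases hd : (1 ∈ Des₁ c ↔ 1 ∈ Des₂ c)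
    · left
      ext x
      by_cases hx : x ∈ Finset.Ico 1 n
      · have hx' := Finset.mem_Ico.mp hx
        exact ((hIa c x hx'.1 hx'.2).mpr hd).symm
      · constructor
        · intro h; exact absurd (hD₂ c h) hx
        · intro h; exact absurd (hD₁ c h) hx
    · right
      ext x
      simp only [Finset.mem_sdiff]
      by_cases hx : x ∈ Finset.Ico 1 n
      · have hx' := Finset.mem_Ico.mp hx
        have hne : ¬(x ∈ Des₁ c ↔ x ∈ Des₂ c) :=
          fun hh => hd ((hIa c x hx'.1 hx'.2).mp hh)
        tauto
      · have h2 : x ∉ Des₂ c := fun h => hx (hD₂ c h)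
        tauto
  -- Equality of Des₁ c and Des₂ c is detected at any single position of Ico 1 n.
  have memP : ∀ c : C, ∀ x : ℕ, x ∈ Finset.Ico 1 n →
      (Des₂ c = Des₁ c ↔ (x ∈ Des₁ c ↔ x ∈ Des₂ c)) := by
    intro c x hx
    constructor
    · intro h; rw [h]
    · intro h
      rcases claim1 c with h' | h'
      · exact h'
      · exfalso
        rw [h'] at h
        simp only [Finset.mem_sdiff] at h
        tauto
  -- Propagation along an edge, via condition (ii.b).
  have edge : ∀ a b : C, ∀ i : ℕ, 2 ≤ i → i ≤ n - 1 → b = φ i a → φ i a ≠ a →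
      (Des₂ a = Des₁ a ↔ Des₂ b = Des₁ b) := by
    intro a b i h2 hn hb hne
    have hg : phiG n φ i a = φ i a := by simp [phiG, h2, hn]
    have hfix : phiG n φ i a ≠ a := by rw [hg]; exact hne
    have e1 := (h₁b i h2 hn a hfix).1
    have e2 := (h₂b i h2 hn a hfix).1
    rw [hg, ← hb] at e1 e2
    have hIco : i - 1 ∈ Finset.Ico 1 n := Finset.mem_Ico.mpr ⟨by omega, by omega⟩
    rw [memP a (i - 1) hIco, memP b (i - 1) hIco]
    tauto
  -- Propagation along the whole component.
  have comp : ∀ c : C, Relation.EqvGen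
      (fun a b => ∃ i, 2 ≤ i ∧ i ≤ n - 1 ∧ b = φ i a ∧ φ i a ≠ a) c₀ c →
      (Des₂ c = Des₁ c ↔ Des₂ c₀ = Des₁ c₀) := by
    intro c h
    induction h with
    | rel a b hab =>
      rcases hab with ⟨i, h2, hn, hb, hne⟩
      exact (edge a b i h2 hn hb hne).symm
    | refl a => exact Iff.rfl
    | symm a b _ ih => exact ih.symm
    | trans a b c _ _ ih1 ih2 => exact ih2.trans ih1
  by_cases h0 : Des₂ c₀ = Des₁ c₀
  · left
    intro c hc
    exact ((comp c hc).mpr h0).symm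
  · right
    intro c hc
    have hne : Des₂ c ≠ Des₁ c := fun h => h0 ((comp c hc).mp h)
    rcases claim1 c with h | h
    · exact absurd h hne
    · exact h

end
end

section
/- Monk's formula: for any u ∈ S_∞ and positive integer k, one has 𝔖_u · (z_1 + ⋯ + z_k) = Σ 𝔖_{u t_{ij}}, the sum over all transpositions t_{ij} with i ≤ k < j and ℓ(u t_{ij}) = ℓ(u) + 1. -/
open MvPolynomial

noncomputable section

/-! ### Auxiliary development for Monk formula -/

namespace MonkAux

open Finset Equiv

def FixedFrom (w : Equiv.Perm ℕ) (N : ℕ) : Prop := ∀ x, N ≤ x → w x = x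

lemma FixedFrom.mono {w : Equiv.Perm ℕ} {N N' : ℕ} (h : FixedFrom w N) (hle : N ≤ N') :
    FixedFrom w N' := fun x hx => h x (le_trans hle hx)

lemma FixedFrom.lt {w : Equiv.Perm ℕ} {N : ℕ} (h : FixedFrom w N) {x : ℕ} (hx : x < N) :
    w x < N := by
  by_contra hcon
  push_neg at hcon
  have h2 : w (w x) = w x := h _ hcon
  have := w.injective h2
  omega

lemma FixedFrom.mul_swap {w : Equiv.Perm ℕ} {N a b : ℕ} (h : FixedFrom w N)
    (ha : a < N) (hb : b < N) : FixedFrom (w * Equiv.swap a b) N := by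
  intro x hx
  have hxa : x ≠ a := by omega
  have hxb : x ≠ b := by omega
  rw [Equiv.Perm.mul_apply, Equiv.swap_apply_of_ne_of_ne hxa hxb]
  exact h x hx

/-- inversions of `w` inside the box `[0,N)²`. -/
def invF (w : Equiv.Perm ℕ) (N : ℕ) : Finset (ℕ × ℕ) :=
  ((range N) ×ˢ (range N)).filter (fun p => p.1 < p.2 ∧ w p.2 < w p.1)

lemma permLength_eq_card {w : Equiv.Perm ℕ} {N : ℕ} (h : FixedFrom w N) :
    permLength w = (invF w N).card := by
  have hset : {p : ℕ × ℕ | p.1 < p.2 ∧ w p.2 < w p.1} = ↑(invF w N) := by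
    ext p
    simp only [invF, Finset.coe_filter, Finset.mem_coe, Finset.mem_product, Finset.mem_range,
      Set.mem_setOf_eq]
    constructor
    · rintro ⟨h1, h2⟩
      have hp2 : p.2 < N := by
        by_contra hc
        push_neg at hc
        have e2 : w p.2 = p.2 := h _ hc
        rcases lt_or_ge p.1 N with h1N | h1N
        · have := h.lt h1N
          omega
        · have e1 : w p.1 = p.1 := h _ h1N
          omega
      exact ⟨⟨by omega, hp2⟩, h1, h2⟩
    · rintro ⟨-, h1, h2⟩
      exact ⟨h1, h2⟩
  rw [permLength,
    show Nat.card {p : ℕ × ℕ // p.1 < p.2 ∧ w p.2 < w p.1}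
      = Nat.card {p : ℕ × ℕ | p.1 < p.2 ∧ w p.2 < w p.1} from rfl,
    Nat.card_coe_set_eq, hset, Set.ncard_coe_finset]

lemma permLength_le {w : Equiv.Perm ℕ} {N : ℕ} (h : FixedFrom w N) :
    permLength w ≤ N * N := by
  rw [permLength_eq_card h]
  calc (invF w N).card ≤ ((range N) ×ˢ (range N)).card := Finset.card_le_card (Finset.filter_subset _ _)
  _ = N * N := by simp

end MonkAux


namespace MonkAux
open Finset Equiv

/-- the "reversal region" of the transposition `t_{ab}`. -/
def Rp (a b : ℕ) (p : ℕ × ℕ) : Prop := (p.1 = a ∧ p.2 ≤ b) ∨ (p.2 = b ∧ a ≤ p.1)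

instance (a b : ℕ) (p : ℕ × ℕ) : Decidable (Rp a b p) := by unfold Rp; infer_instance

/-- image of a sorted pair under `t_{ab}`, re-sorted. -/
def sp (a b : ℕ) (p : ℕ × ℕ) : ℕ × ℕ :=
  if Equiv.swap a b p.1 < Equiv.swap a b p.2 then (Equiv.swap a b p.1, Equiv.swap a b p.2)
  else (Equiv.swap a b p.2, Equiv.swap a b p.1)

lemma swap_eq_ite (a b x : ℕ) : Equiv.swap a b x = if x = a then b else if x = b then a else x :=
  Equiv.swap_apply_def a b x

section SpLemmas
variable {a b : ℕ} {p : ℕ × ℕ} (hab : a < b) (hp : p.1 < p.2)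
include hab hp

lemma not_Rp_lt (h : ¬ Rp a b p) : Equiv.swap a b p.1 < Equiv.swap a b p.2 := by
  simp only [Rp, not_or, not_and'] at h
  rw [swap_eq_ite, swap_eq_ite]
  split_ifs <;> omega

lemma Rp_gt (h : Rp a b p) : Equiv.swap a b p.2 < Equiv.swap a b p.1 := by
  simp only [Rp] at h
  rw [swap_eq_ite, swap_eq_ite]
  split_ifs <;> omega

lemma sp_fst_lt_snd : (sp a b p).1 < (sp a b p).2 := by
  rcases Classical.em (Rp a b p) with h | h
  · rw [sp, if_neg (by have := Rp_gt hab hp h; omega)]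
    exact Rp_gt hab hp h
  · rw [sp, if_pos (not_Rp_lt hab hp h)]
    exact not_Rp_lt hab hp h

lemma sp_eq_of_Rp (h : Rp a b p) :
    sp a b p = (Equiv.swap a b p.2, Equiv.swap a b p.1) := by
  have h1 := Rp_gt hab hp h
  rw [sp, if_neg (by omega)]

lemma sp_eq_of_not_Rp (h : ¬ Rp a b p) :
    sp a b p = (Equiv.swap a b p.1, Equiv.swap a b p.2) := by
  rw [sp, if_pos (not_Rp_lt hab hp h)]

lemma sp_sp : sp a b (sp a b p) = p := by
  rcases Classical.em (Rp a b p) with h | h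
  · rw [sp_eq_of_Rp hab hp h, sp]
    simp only [Equiv.swap_apply_self]
    rw [if_neg (by omega)]
  · rw [sp_eq_of_not_Rp hab hp h, sp]
    simp only [Equiv.swap_apply_self]
    rw [if_pos hp]

lemma Rp_sp_of_Rp (h : Rp a b p) : Rp a b (sp a b p) := by
  rw [sp_eq_of_Rp hab hp h]
  simp only [Rp] at h ⊢
  rw [swap_eq_ite, swap_eq_ite]
  split_ifs <;> omega

lemma Rp_sp_iff : Rp a b (sp a b p) ↔ Rp a b p := by
  constructor
  · intro h
    by_contra hc
    have h1 := not_Rp_lt hab hp hc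
    have h2 := Rp_sp_of_Rp hab (sp_fst_lt_snd hab hp) h
    rw [sp_sp hab hp] at h2
    exact hc h2
  · exact Rp_sp_of_Rp hab hp

lemma sp_lt_N {N : ℕ} (haN : a < N) (hbN : b < N) (h1 : p.1 < N) (h2 : p.2 < N) :
    (sp a b p).1 < N ∧ (sp a b p).2 < N := by
  simp only [sp, swap_eq_ite]
  split_ifs <;> refine ⟨?_, ?_⟩ <;> dsimp only <;> omega

end SpLemmas

end MonkAux


namespace MonkAux
open Finset Equiv

section Master
variable {w : Equiv.Perm ℕ} {N a b : ℕ}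

lemma master (hw : FixedFrom w N) (hab : a < b) (hbN : b < N) :
    permLength (w * Equiv.swap a b)
      + 2 * (((Ioo a b).filter (fun c => w c < w a)).card
           + ((Ioo a b).filter (fun c => w b < w c)).card
           + (if w b < w a then 1 else 0)) + 1
    = permLength w + 2 * (b - a) := by
  have haN : a < N := lt_trans hab hbN
  have hvN : FixedFrom (w * Equiv.swap a b) N := hw.mul_swap haN hbN
  set F : Finset (ℕ × ℕ) := ((range N) ×ˢ (range N)).filter (fun p => p.1 < p.2) with hF
  have hmemF : ∀ p : ℕ × ℕ, p ∈ F ↔ (p.1 < N ∧ p.2 < N ∧ p.1 < p.2) := by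
    intro p
    simp only [hF, Finset.mem_filter, Finset.mem_product, Finset.mem_range]
    tauto
  set Pv : ℕ × ℕ → Prop := fun p => w (Equiv.swap a b p.2) < w (Equiv.swap a b p.1) with hPv
  set Pw : ℕ × ℕ → Prop := fun p => w p.2 < w p.1 with hPw
  have hlenv : permLength (w * Equiv.swap a b) = (F.filter Pv).card := by
    rw [permLength_eq_card hvN, invF, hF, Finset.filter_filter]
    congr 1
  have hlenw : permLength w = (F.filter Pw).card := by
    rw [permLength_eq_card hw, invF, hF, Finset.filter_filter]
  -- membership of sp in F
  have hspF : ∀ p ∈ F, sp a b p ∈ F := by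
    intro p hp
    rw [hmemF] at hp ⊢
    obtain ⟨h1, h2, h3⟩ := hp
    obtain ⟨g1, g2⟩ := sp_lt_N hab h3 haN hbN h1 h2
    exact ⟨g1, g2, sp_fst_lt_snd hab h3⟩
  -- non-R parts have equal cardinality
  have f3 : ((F.filter Pv).filter (fun p => ¬ Rp a b p)).card
      = ((F.filter Pw).filter (fun p => ¬ Rp a b p)).card := by
    apply Finset.card_bij' (i := fun p _ => sp a b p) (j := fun p _ => sp a b p)
    · intro p hp
      simp only [Finset.mem_filter] at hp ⊢
      obtain ⟨⟨hpF, hpv⟩, hnr⟩ := hp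
      have hlt : p.1 < p.2 := ((hmemF p).1 hpF).2.2
      refine ⟨⟨hspF p hpF, ?_⟩, ?_⟩
      · rw [sp_eq_of_not_Rp hab hlt hnr, hPw]
        exact hpv
      · rw [Rp_sp_iff hab hlt]
        exact hnr
    · intro p hp
      simp only [Finset.mem_filter] at hp ⊢
      obtain ⟨⟨hpF, hpw⟩, hnr⟩ := hp
      have hlt : p.1 < p.2 := ((hmemF p).1 hpF).2.2
      refine ⟨⟨hspF p hpF, ?_⟩, ?_⟩
      · rw [sp_eq_of_not_Rp hab hlt hnr, hPv]
        simp only [Equiv.swap_apply_self]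
        exact hpw
      · rw [Rp_sp_iff hab hlt]
        exact hnr
    · intro p hp
      simp only [Finset.mem_filter] at hp
      exact sp_sp hab ((hmemF p).1 hp.1.1).2.2
    · intro p hp
      simp only [Finset.mem_filter] at hp
      exact sp_sp hab ((hmemF p).1 hp.1.1).2.2
  -- R parts
  have hIvR : (F.filter Pv).filter (Rp a b) = (F.filter (Rp a b)).filter Pv :=
    Finset.filter_comm _ _ _
  have hIwR : (F.filter Pw).filter (Rp a b) = (F.filter (Rp a b)).filter Pw :=
    Finset.filter_comm _ _ _
  have hRpoint : ∀ p ∈ F.filter (Rp a b), Pv p ↔ ¬ Pw (sp a b p) := by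
    intro p hp
    simp only [Finset.mem_filter] at hp
    have hlt : p.1 < p.2 := ((hmemF p).1 hp.1).2.2
    rw [sp_eq_of_Rp hab hlt hp.2, hPv, hPw]
    have hne : Equiv.swap a b p.1 ≠ Equiv.swap a b p.2 :=
      fun h => (by omega : p.1 ≠ p.2) ((Equiv.swap a b).injective h)
    have hne2 : w (Equiv.swap a b p.1) ≠ w (Equiv.swap a b p.2) :=
      fun h => hne (w.injective h)
    dsimp only
    omega
  have hRspmem : ∀ p ∈ F.filter (Rp a b), sp a b p ∈ F.filter (Rp a b) := by
    intro p hp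
    simp only [Finset.mem_filter] at hp ⊢
    have hlt : p.1 < p.2 := ((hmemF p).1 hp.1).2.2
    exact ⟨hspF p hp.1, (Rp_sp_iff hab hlt).2 hp.2⟩
  have f4a : (F.filter (Rp a b)).filter Pv
      = (F.filter (Rp a b)).filter (fun p => ¬ Pw (sp a b p)) := by
    apply Finset.filter_congr
    exact hRpoint
  have f4b : ((F.filter (Rp a b)).filter (fun p => Pw (sp a b p))).card
      = ((F.filter (Rp a b)).filter Pw).card := by
    apply Finset.card_bij' (i := fun p _ => sp a b p) (j := fun p _ => sp a b p)
    · intro p hp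
      simp only [Finset.mem_filter] at hp ⊢
      have hmem := hRspmem p (Finset.mem_filter.2 ⟨hp.1.1, hp.1.2⟩)
      simp only [Finset.mem_filter] at hmem
      exact ⟨⟨hmem.1, hmem.2⟩, hp.2⟩
    · intro p hp
      simp only [Finset.mem_filter] at hp ⊢
      have hmem := hRspmem p (Finset.mem_filter.2 ⟨hp.1.1, hp.1.2⟩)
      simp only [Finset.mem_filter] at hmem
      have hlt : p.1 < p.2 := ((hmemF p).1 hp.1.1).2.2
      refine ⟨⟨hmem.1, hmem.2⟩, ?_⟩
      rw [sp_sp hab hlt]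
      exact hp.2
    · intro p hp
      simp only [Finset.mem_filter] at hp
      exact sp_sp hab ((hmemF p).1 hp.1.1).2.2
    · intro p hp
      simp only [Finset.mem_filter] at hp
      exact sp_sp hab ((hmemF p).1 hp.1.1).2.2
  have f4 : ((F.filter Pv).filter (Rp a b)).card + ((F.filter Pw).filter (Rp a b)).card
      = (F.filter (Rp a b)).card := by
    rw [hIvR, hIwR, f4a, ← f4b]
    rw [Nat.add_comm]
    exact Finset.card_filter_add_card_filter_not (fun p => Pw (sp a b p))
  -- cardinality of the region FR
  have hFRunion : F.filter (Rp a b)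
      = ((Ioc a b).image fun c => (a,c)) ∪ ((Ico a b).image fun c => (c,b)) := by
    ext ⟨x, y⟩
    simp only [Finset.mem_filter, hmemF, Finset.mem_union, Finset.mem_image, Finset.mem_Ioc,
      Finset.mem_Ico, Rp, Prod.mk.injEq]
    constructor
    · rintro ⟨⟨h1, h2, h3⟩, h4 | h4⟩
      · exact Or.inl ⟨y, ⟨by omega, by omega⟩, by omega, rfl⟩
      · exact Or.inr ⟨x, ⟨by omega, by omega⟩, rfl, by omega⟩
    · rintro (⟨c, ⟨hc1, hc2⟩, rfl, rfl⟩ | ⟨c, ⟨hc1, hc2⟩, rfl, rfl⟩)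
      · exact ⟨⟨by omega, by omega, by omega⟩, Or.inl ⟨rfl, by omega⟩⟩
      · exact ⟨⟨by omega, by omega, by omega⟩, Or.inr ⟨rfl, by omega⟩⟩
  have hinj1 : Function.Injective (fun c : ℕ => ((a, c) : ℕ × ℕ)) := by
    intro c d h
    simpa using h
  have hinj2 : Function.Injective (fun c : ℕ => ((c, b) : ℕ × ℕ)) := by
    intro c d h
    simpa using h
  have f5 : (F.filter (Rp a b)).card + 1 = (b - a) + (b - a) := by
    have hinter : (((Ioc a b).image fun c => (a,c)) ∩ ((Ico a b).image fun c => (c,b)))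
        = {(a, b)} := by
      ext ⟨x, y⟩
      simp only [Finset.mem_inter, Finset.mem_image, Finset.mem_Ioc, Finset.mem_Ico,
        Finset.mem_singleton, Prod.mk.injEq]
      constructor
      · rintro ⟨⟨c, ⟨hc1, hc2⟩, he1, he2⟩, ⟨d, ⟨hd1, hd2⟩, he3, he4⟩⟩
        constructor <;> omega
      · rintro ⟨h1, h2⟩
        exact ⟨⟨y, ⟨by omega, by omega⟩, by omega, rfl⟩, ⟨x, ⟨by omega, by omega⟩, rfl, by omega⟩⟩
    have := Finset.card_union_add_card_inter ((Ioc a b).image fun c => ((a, c) : ℕ × ℕ))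
      ((Ico a b).image fun c => ((c, b) : ℕ × ℕ))
    rw [hinter, Finset.card_singleton, Finset.card_image_of_injective _ hinj1,
      Finset.card_image_of_injective _ hinj2, Nat.card_Ioc, Nat.card_Ico] at this
    rw [hFRunion]
    exact this
  -- decomposition of FR into three disjoint pieces
  have hFR3 : F.filter (Rp a b)
      = (((Ioo a b).image fun c => (a,c)) ∪ ((Ioo a b).image fun c => (c,b))) ∪ {(a, b)} := by
    ext ⟨x, y⟩
    simp only [Finset.mem_filter, hmemF, Finset.mem_union, Finset.mem_image, Finset.mem_Ioo,
      Finset.mem_singleton, Rp, Prod.mk.injEq]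
    constructor
    · rintro ⟨⟨h1, h2, h3⟩, h4 | h4⟩
      · rcases Nat.lt_or_ge y b with hyb | hyb
        · exact Or.inl (Or.inl ⟨y, ⟨by omega, by omega⟩, by omega, rfl⟩)
        · exact Or.inr (by omega)
      · rcases Nat.lt_or_ge a x with hax | hax
        · exact Or.inl (Or.inr ⟨x, ⟨by omega, by omega⟩, rfl, by omega⟩)
        · exact Or.inr (by omega)
    · rintro ((⟨c, ⟨hc1, hc2⟩, h5, h6⟩ | ⟨c, ⟨hc1, hc2⟩, h5, h6⟩) | ⟨h5, h6⟩)
      · exact ⟨⟨by omega, by omega, by omega⟩, Or.inl ⟨by omega, by omega⟩⟩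
      · exact ⟨⟨by omega, by omega, by omega⟩, Or.inr ⟨by omega, by omega⟩⟩
      · exact ⟨⟨by omega, by omega, by omega⟩, Or.inl ⟨by omega, by omega⟩⟩
  have hdisj1 : Disjoint ((Ioo a b).image fun c => ((a, c) : ℕ × ℕ))
      ((Ioo a b).image fun c => ((c, b) : ℕ × ℕ)) := by
    rw [Finset.disjoint_left]
    rintro ⟨x, y⟩ h1 h2
    simp only [Finset.mem_image, Finset.mem_Ioo, Prod.mk.injEq] at h1 h2
    obtain ⟨c, hc, hc1, hc2⟩ := h1
    obtain ⟨d, hd, hd1, hd2⟩ := h2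
    omega
  have hdisj2 : Disjoint (((Ioo a b).image fun c => ((a, c) : ℕ × ℕ))
      ∪ ((Ioo a b).image fun c => ((c, b) : ℕ × ℕ))) {((a, b) : ℕ × ℕ)} := by
    rw [Finset.disjoint_right]
    rintro ⟨x, y⟩ h1 h2
    simp only [Finset.mem_singleton, Prod.mk.injEq] at h1
    simp only [Finset.mem_union, Finset.mem_image, Finset.mem_Ioo, Prod.mk.injEq] at h2
    rcases h2 with ⟨c, hc, hc1, hc2⟩ | ⟨c, hc, hc1, hc2⟩ <;> omega
  have f6 : ((F.filter (Rp a b)).filter Pw).card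
      = ((Ioo a b).filter (fun c => w c < w a)).card
        + ((Ioo a b).filter (fun c => w b < w c)).card
        + (if w b < w a then 1 else 0) := by
    rw [hFR3, Finset.filter_union, Finset.filter_union]
    rw [Finset.card_union_of_disjoint (hdisj2.mono
      (Finset.union_subset_union (Finset.filter_subset _ _) (Finset.filter_subset _ _))
      (Finset.filter_subset _ _))]
    rw [Finset.card_union_of_disjoint (hdisj1.mono
      (Finset.filter_subset _ _) (Finset.filter_subset _ _))]
    have c1 : (((Ioo a b).image fun c => ((a, c) : ℕ × ℕ)).filter Pw).card
        = ((Ioo a b).filter (fun c => w c < w a)).card := by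
      rw [Finset.filter_image, Finset.card_image_of_injective _ hinj1]
    have c2 : (((Ioo a b).image fun c => ((c, b) : ℕ × ℕ)).filter Pw).card
        = ((Ioo a b).filter (fun c => w b < w c)).card := by
      rw [Finset.filter_image, Finset.card_image_of_injective _ hinj2]
    have c3 : (({((a, b) : ℕ × ℕ)} : Finset (ℕ × ℕ)).filter Pw).card
        = (if w b < w a then 1 else 0) := by
      simp only [Finset.filter_singleton, hPw]
      split_ifs <;> simp
    rw [c1, c2, c3]
  rw [← hIwR] at f6
  have e1 : ((F.filter Pv).filter (Rp a b)).card
      + ((F.filter Pv).filter (fun p => ¬ Rp a b p)).card = (F.filter Pv).card :=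
    Finset.card_filter_add_card_filter_not _
  have e2 : ((F.filter Pw).filter (Rp a b)).card
      + ((F.filter Pw).filter (fun p => ¬ Rp a b p)).card = (F.filter Pw).card :=
    Finset.card_filter_add_card_filter_not _
  rw [hlenv, hlenw]
  omega

end Master
end MonkAux


namespace MonkAux
open Finset Equiv

section Cors
variable {w : Equiv.Perm ℕ} {N a b m : ℕ}

lemma length_asc (hw : FixedFrom w N) (hab : a < b) (hbN : b < N) (hv : w a < w b) :
    permLength (w * Equiv.swap a b)
      = permLength w + 1 + 2 * ((Ioo a b).filter (fun c => w a < w c ∧ w c < w b)).card := by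
  have hm := master hw hab hbN
  rw [if_neg (by omega)] at hm
  have hne : ∀ c, a < c → c < b → w c ≠ w a ∧ w c ≠ w b := by
    intro c h1 h2
    constructor <;> intro h <;> have := w.injective h <;> omega
  have hpart : ((Ioo a b).filter (fun c => ¬ w c < w a))
      = ((Ioo a b).filter (fun c => w b < w c))
        ∪ ((Ioo a b).filter (fun c => w a < w c ∧ w c < w b)) := by
    ext c
    simp only [Finset.mem_filter, Finset.mem_union, Finset.mem_Ioo]
    constructor
    · rintro ⟨⟨h1, h2⟩, h3⟩
      have := hne c h1 h2
      rcases Nat.lt_or_ge (w c) (w b) with h4 | h4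
      · exact Or.inr ⟨⟨h1, h2⟩, by omega, h4⟩
      · exact Or.inl ⟨⟨h1, h2⟩, by omega⟩
    · rintro (⟨⟨h1, h2⟩, h3⟩ | ⟨⟨h1, h2⟩, h3, h4⟩)
      · exact ⟨⟨h1, h2⟩, by omega⟩
      · exact ⟨⟨h1, h2⟩, by omega⟩
  have hdisj : Disjoint ((Ioo a b).filter (fun c => w b < w c))
      ((Ioo a b).filter (fun c => w a < w c ∧ w c < w b)) := by
    rw [Finset.disjoint_left]
    intro c h1 h2
    simp only [Finset.mem_filter] at h1 h2
    omega
  have htot : ((Ioo a b).filter (fun c => w c < w a)).card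
      + ((Ioo a b).filter (fun c => ¬ w c < w a)).card = (Ioo a b).card :=
    Finset.card_filter_add_card_filter_not _
  rw [hpart, Finset.card_union_of_disjoint hdisj] at htot
  have hIoo : (Ioo a b).card = b - a - 1 := by rw [Nat.card_Ioo]
  omega

lemma length_desc (hw : FixedFrom w N) (hab : a < b) (hbN : b < N) (hv : w b < w a) :
    permLength w = permLength (w * Equiv.swap a b) + 1
      + 2 * ((Ioo a b).filter (fun c => w b < w c ∧ w c < w a)).card := by
  have haN : a < N := lt_trans hab hbN
  have hvw : FixedFrom (w * Equiv.swap a b) N := hw.mul_swap haN hbN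
  have ha : (w * Equiv.swap a b) a = w b := by
    rw [Equiv.Perm.mul_apply, Equiv.swap_apply_left]
  have hb : (w * Equiv.swap a b) b = w a := by
    rw [Equiv.Perm.mul_apply, Equiv.swap_apply_right]
  have h := length_asc hvw hab hbN (by rw [ha, hb]; exact hv)
  have hww : w * Equiv.swap a b * Equiv.swap a b = w := by
    rw [mul_assoc, Equiv.swap_mul_self, mul_one]
  rw [hww, ha, hb] at h
  have hfc : ((Ioo a b).filter (fun c => w b < (w * Equiv.swap a b) c
      ∧ (w * Equiv.swap a b) c < w a))
      = ((Ioo a b).filter (fun c => w b < w c ∧ w c < w a)) := by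
    apply Finset.filter_congr
    intro c hc
    simp only [Finset.mem_Ioo] at hc
    rw [Equiv.Perm.mul_apply, Equiv.swap_apply_of_ne_of_ne (by omega) (by omega)]
  rw [hfc] at h
  exact h

lemma cover_lt (hw : FixedFrom w N) (hab : a < b) (hbN : b < N)
    (hcov : permLength (w * Equiv.swap a b) = permLength w + 1) : w a < w b := by
  rcases lt_trichotomy (w a) (w b) with h | h | h
  · exact h
  · exact absurd (w.injective h) (by omega)
  · have := length_desc hw hab hbN h
    omega

lemma cover_nomid (hw : FixedFrom w N) (hab : a < b) (hbN : b < N)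
    (hcov : permLength (w * Equiv.swap a b) = permLength w + 1) :
    ∀ c, a < c → c < b → ¬ (w a < w c ∧ w c < w b) := by
  have hlt := cover_lt hw hab hbN hcov
  have h := length_asc hw hab hbN hlt
  have hcard : ((Ioo a b).filter (fun c => w a < w c ∧ w c < w b)).card = 0 := by omega
  intro c h1 h2 h3
  have : c ∈ (Ioo a b).filter (fun c => w a < w c ∧ w c < w b) := by
    simp only [Finset.mem_filter, Finset.mem_Ioo]
    exact ⟨⟨h1, h2⟩, h3⟩
  rw [Finset.card_eq_zero] at hcard
  rw [hcard] at this
  exact absurd this (Finset.notMem_empty c)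

lemma mk_cover (hw : FixedFrom w N) (hab : a < b) (hbN : b < N) (hlt : w a < w b)
    (hmid : ∀ c, a < c → c < b → ¬ (w a < w c ∧ w c < w b)) :
    permLength (w * Equiv.swap a b) = permLength w + 1 := by
  have h := length_asc hw hab hbN hlt
  have : ((Ioo a b).filter (fun c => w a < w c ∧ w c < w b)) = ∅ := by
    rw [Finset.filter_eq_empty_iff]
    intro c hc
    simp only [Finset.mem_Ioo] at hc
    exact hmid c hc.1 hc.2
  rw [this] at h
  simpa using h

lemma Ioo_succ_empty : Ioo m (m + 1) = (∅ : Finset ℕ) := by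
  ext c
  simp only [Finset.mem_Ioo, Finset.notMem_empty, iff_false]
  omega

lemma asc_s (hw : FixedFrom w N) (hmN : m + 1 < N) (h : w m < w (m + 1)) :
    permLength (w * Equiv.swap m (m + 1)) = permLength w + 1 := by
  have := length_asc hw (by omega : m < m + 1) hmN h
  rw [Ioo_succ_empty] at this
  simpa using this

lemma desc_s (hw : FixedFrom w N) (hmN : m + 1 < N) (h : w (m + 1) < w m) :
    permLength w = permLength (w * Equiv.swap m (m + 1)) + 1 := by
  have := length_desc hw (by omega : m < m + 1) hmN h
  rw [Ioo_succ_empty] at this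
  simpa using this

end Cors
end MonkAux


namespace MonkAux
open Finset Equiv MvPolynomial

section Alg

def dd (m : ℕ) : MvPolynomial ℕ ℤ := X m - X (m + 1)

lemma dd_ne (m : ℕ) : dd m ≠ 0 := by
  rw [dd]
  apply sub_ne_zero_of_ne
  intro h
  have := MvPolynomial.X_injective h
  omega

lemma dd_cancel {m : ℕ} {f g : MvPolynomial ℕ ℤ} (h : dd m * f = dd m * g) : f = g :=
  mul_left_cancel₀ (dd_ne m) h

lemma sigma_sigma (m : ℕ) (f : MvPolynomial ℕ ℤ) :
    rename (⇑(Equiv.swap m (m + 1))) (rename (⇑(Equiv.swap m (m + 1))) f) = f := by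
  rw [MvPolynomial.rename_rename]
  have : (⇑(Equiv.swap m (m + 1)) ∘ ⇑(Equiv.swap m (m + 1))) = id := by
    funext x
    simp [Equiv.swap_apply_self]
  rw [this, MvPolynomial.rename_id, AlgHom.id_apply]

lemma sigma_dd (m : ℕ) : rename (⇑(Equiv.swap m (m + 1))) (dd m) = - dd m := by
  simp only [dd, map_sub, MvPolynomial.rename_X, Equiv.swap_apply_left, Equiv.swap_apply_right]
  ring

variable {S : Equiv.Perm ℕ → MvPolynomial ℕ ℤ}

lemma sym_of_asc (hS : IsSchubertFamily S) {v : Equiv.Perm ℕ} {m : ℕ}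
    (h : permLength (v * Equiv.swap m (m + 1)) = permLength v + 1) :
    rename (⇑(Equiv.swap m (m + 1))) (S v) = S v := by
  have h2 : permLength (v * Equiv.swap m (m + 1))
      = permLength ((v * Equiv.swap m (m + 1)) * Equiv.swap m (m + 1)) + 1 := by
    rw [mul_assoc, Equiv.swap_mul_self, mul_one]
    exact h
  have h3 := hS.2 (v * Equiv.swap m (m + 1)) m h2
  rw [mul_assoc, Equiv.swap_mul_self, mul_one] at h3
  have h4 := congrArg (rename (⇑(Equiv.swap m (m + 1)))) h3
  rw [map_sub, sigma_sigma, map_mul] at h4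
  rw [show (rename (⇑(Equiv.swap m (m+1)))) (X m - X (m+1)) = - dd m from sigma_dd m] at h4
  apply dd_cancel (m := m)
  simp only [dd] at h3 h4 ⊢
  linear_combination (-1 : MvPolynomial ℕ ℤ) * h3 - h4

/-- the elementary sum `z_1 + ⋯ + z_k`. -/
def ee (k : ℕ) : MvPolynomial ℕ ℤ := ∑ i ∈ range k, X i

lemma sigma_ee_ne {m k : ℕ} (h : k ≠ m + 1) : rename (⇑(Equiv.swap m (m + 1))) (ee k) = ee k := by
  rw [ee, map_sum]
  simp_rw [MvPolynomial.rename_X]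
  rcases Nat.lt_or_ge k (m + 1) with hk | hk
  · apply Finset.sum_congr rfl
    intro i hi
    simp only [Finset.mem_range] at hi
    rw [Equiv.swap_apply_of_ne_of_ne (by omega) (by omega)]
  · have hk2 : m + 2 ≤ k := by omega
    apply Finset.sum_equiv (Equiv.swap m (m + 1))
    · intro i
      simp only [Finset.mem_range]
      rw [Equiv.swap_apply_def]
      split_ifs <;> omega
    · intro i _
      rfl

lemma sigma_ee_eq {m : ℕ} :
    rename (⇑(Equiv.swap m (m + 1))) (ee (m + 1)) = ee (m + 1) - dd m := by
  have h1 : ee (m + 1) = ee m + X m := by rw [ee, ee, Finset.sum_range_succ]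
  rw [h1, map_add, sigma_ee_ne (by omega), MvPolynomial.rename_X, Equiv.swap_apply_left, dd]
  ring

end Alg

section Cov

def covSet (u : Equiv.Perm ℕ) (k : ℕ) : Set (ℕ × ℕ) :=
  {p | p.1 < k ∧ k ≤ p.2 ∧ permLength (u * Equiv.swap p.1 p.2) = permLength u + 1}

def covF (u : Equiv.Perm ℕ) (k M : ℕ) : Finset (ℕ × ℕ) :=
  ((range M) ×ˢ (range (M + 1))).filter
    (fun p => p.1 < k ∧ k ≤ p.2 ∧ permLength (u * Equiv.swap p.1 p.2) = permLength u + 1)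

lemma cover_snd_le {u : Equiv.Perm ℕ} {N a b : ℕ} (hu : FixedFrom u N) (hab : a < b)
    (haN : a < N) (hcov : permLength (u * Equiv.swap a b) = permLength u + 1) : b ≤ N := by
  by_contra hcon
  push_neg at hcon
  have hu' : FixedFrom u (b + 1) := hu.mono (by omega)
  have hmid := cover_nomid hu' hab (by omega) hcov N haN (by omega)
  apply hmid
  constructor
  · rw [hu N le_rfl]
    exact hu.lt haN
  · rw [hu N le_rfl, hu b (by omega)]
    omega

lemma covSet_eq {u : Equiv.Perm ℕ} {N k : ℕ} (hu : FixedFrom u N) (hk : k ≤ N) :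
    covSet u k = ↑(covF u k N) := by
  ext p
  simp only [covSet, covF, Finset.coe_filter, Set.mem_setOf_eq, Finset.mem_coe,
    Finset.mem_product, Finset.mem_range]
  constructor
  · rintro ⟨h1, h2, h3⟩
    have hab : p.1 < p.2 := by omega
    have h4 : p.2 ≤ N := cover_snd_le hu hab (by omega) h3
    exact ⟨⟨by omega, by omega⟩, h1, h2, h3⟩
  · rintro ⟨-, h⟩
    exact h

lemma monk_sum_eq {u : Equiv.Perm ℕ} {N k : ℕ} (S : Equiv.Perm ℕ → MvPolynomial ℕ ℤ)
    (hu : FixedFrom u N) (hk : k ≤ N) :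
    (∑ᶠ p ∈ covSet u k, S (u * Equiv.swap p.1 p.2))
      = ∑ p ∈ covF u k N, S (u * Equiv.swap p.1 p.2) := by
  rw [covSet_eq hu hk, finsum_mem_coe_finset]

end Cov
end MonkAux


namespace MonkAux
open Finset Equiv MvPolynomial

section Mono

lemma rename_monomial_prod {n j : ℕ} (hj : j + 1 < n) (α : ℕ → ℕ) :
    rename (⇑(Equiv.swap j (j + 1))) (∏ l ∈ range n, (X l : MvPolynomial ℕ ℤ) ^ α l)
      = ∏ l ∈ range n, (X l : MvPolynomial ℕ ℤ) ^ α (Equiv.swap j (j + 1) l) := by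
  rw [map_prod]
  simp_rw [map_pow, MvPolynomial.rename_X]
  apply Finset.prod_equiv (Equiv.swap j (j + 1))
  · intro l
    simp only [Finset.mem_range]
    rw [Equiv.swap_apply_def]
    split_ifs <;> omega
  · intro l _
    rw [Equiv.swap_apply_self]

lemma monomial_dd_step {n j : ℕ} (hj : j + 1 < n) (α : ℕ → ℕ) (hα : α j = α (j + 1) + 1) :
    (∏ l ∈ range n, (X l : MvPolynomial ℕ ℤ) ^ α l)
      - rename (⇑(Equiv.swap j (j + 1))) (∏ l ∈ range n, (X l : MvPolynomial ℕ ℤ) ^ α l)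
    = dd j * ∏ l ∈ range n, (X l : MvPolynomial ℕ ℤ) ^ (if l = j then α (j + 1) else α l) := by
  rw [rename_monomial_prod hj α]
  have hjmem : j ∈ range n := by simp only [Finset.mem_range]; omega
  have hj1mem : j + 1 ∈ (range n).erase j := by
    simp only [Finset.mem_erase, Finset.mem_range]
    omega
  have key : ∀ β : ℕ → ℕ, (∏ l ∈ range n, (X l : MvPolynomial ℕ ℤ) ^ β l)
      = X j ^ β j * (X (j + 1) ^ β (j + 1)
          * ∏ l ∈ ((range n).erase j).erase (j + 1), (X l : MvPolynomial ℕ ℤ) ^ β l) := by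
    intro β
    rw [← Finset.mul_prod_erase _ _ hjmem, ← Finset.mul_prod_erase _ _ hj1mem]
  rw [key α, key (fun l => α (Equiv.swap j (j + 1) l)),
    key (fun l => if l = j then α (j + 1) else α l)]
  have h2 : ∀ l ∈ ((range n).erase j).erase (j + 1),
      (X l : MvPolynomial ℕ ℤ) ^ α (Equiv.swap j (j + 1) l) = (X l : MvPolynomial ℕ ℤ) ^ α l := by
    intro l hl
    simp only [Finset.mem_erase] at hl
    rw [Equiv.swap_apply_of_ne_of_ne hl.2.1 hl.1]
  have h3 : ∀ l ∈ ((range n).erase j).erase (j + 1),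
      (X l : MvPolynomial ℕ ℤ) ^ (if l = j then α (j + 1) else α l)
        = (X l : MvPolynomial ℕ ℤ) ^ α l := by
    intro l hl
    simp only [Finset.mem_erase] at hl
    rw [if_neg hl.2.1]
  rw [Finset.prod_congr rfl h2, Finset.prod_congr rfl h3]
  rw [Equiv.swap_apply_left, Equiv.swap_apply_right, if_pos rfl, if_neg (by omega : j + 1 ≠ j)]
  rw [hα, dd, pow_succ]
  ring

end Mono

section Chain

def jf (i r : ℕ) : ℕ := if r < i then r else r + 1

def chainP (M i : ℕ) : ℕ → Equiv.Perm ℕ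
  | 0 => w0 (M + 1)
  | r + 1 => chainP M i r * Equiv.swap (jf i r) (jf i r + 1)

def cfun (M i r x : ℕ) : ℕ :=
  if r ≤ i then (if x < r then M - 1 - x else if x = r then M else if x ≤ M then M - x else x)
  else (if x = i then M else if x ≤ r then M - 1 - x
        else if x = r + 1 then M - i - 1 else if x ≤ M then M - x else x)

lemma w0_apply (n x : ℕ) : w0 n x = if x < n then n - 1 - x else x := rfl

set_option maxHeartbeats 1600000 in
lemma chain_apply {M i : ℕ} (hi : i < M) :
    ∀ r, r ≤ M - 1 → ∀ x, chainP M i r x = cfun M i r x := by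
  intro r
  induction r with
  | zero =>
    intro _ x
    show w0 (M + 1) x = _
    rw [w0_apply, cfun]
    split_ifs <;> omega
  | succ r ih =>
    intro hr x
    show (chainP M i r * Equiv.swap (jf i r) (jf i r + 1)) x = _
    rw [Equiv.Perm.mul_apply]
    have hjf : jf i r = if r < i then r else r + 1 := rfl
    rcases Nat.lt_or_ge r i with hri | hri
    · rw [hjf, if_pos hri]
      rcases eq_or_ne x r with rfl | hx1
      · rw [Equiv.swap_apply_left, ih (by omega), cfun, cfun]
        split_ifs <;> omega
      · rcases eq_or_ne x (r + 1) with rfl | hx2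
        · rw [Equiv.swap_apply_right, ih (by omega), cfun, cfun]
          split_ifs <;> omega
        · rw [Equiv.swap_apply_of_ne_of_ne hx1 hx2, ih (by omega), cfun, cfun]
          split_ifs <;> omega
    · rw [hjf, if_neg (by omega)]
      rcases eq_or_ne x (r + 1) with rfl | hx1
      · rw [Equiv.swap_apply_left, ih (by omega), cfun, cfun]
        split_ifs <;> omega
      · rcases eq_or_ne x (r + 1 + 1) with rfl | hx2
        · rw [Equiv.swap_apply_right, ih (by omega), cfun, cfun]
          split_ifs <;> omega
        · rw [Equiv.swap_apply_of_ne_of_ne hx1 hx2, ih (by omega), cfun, cfun]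
          split_ifs <;> omega

lemma chain_fixed {M i : ℕ} (hi : i < M) {r : ℕ} (hr : r ≤ M - 1) :
    FixedFrom (chainP M i r) (M + 1) := by
  intro x hx
  rw [chain_apply hi r hr x, cfun]
  split_ifs <;> omega

end Chain
end MonkAux


namespace MonkAux
open Finset Equiv MvPolynomial

section ChainPoly

def af (M i r l : ℕ) : ℕ := M - l - (if l < jf i r ∧ l ≠ i then 1 else 0)

def Pm (M i r : ℕ) : MvPolynomial ℕ ℤ := ∏ l ∈ range (M + 1), (X l : MvPolynomial ℕ ℤ) ^ af M i r l

variable {S : Equiv.Perm ℕ → MvPolynomial ℕ ℤ}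

lemma chain_poly (hS : IsSchubertFamily S) {M i : ℕ} (hi : i < M) :
    ∀ r, r ≤ M - 1 → S (chainP M i r) = Pm M i r := by
  intro r
  induction r with
  | zero =>
    intro _
    show S (w0 (M + 1)) = _
    rw [hS.1 (M + 1), Pm]
    apply Finset.prod_congr rfl
    intro l _
    congr 1
    simp only [af, jf]
    split_ifs <;> omega
  | succ r ih =>
    intro hr
    have hjb : jf i r ≤ M - 1 := by simp only [jf]; split_ifs <;> omega
    set j := jf i r with hj
    have hfix : FixedFrom (chainP M i r) (M + 1) := chain_fixed hi (by omega)
    have hdesc : (chainP M i r) (j + 1) < (chainP M i r) j := by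
      rw [chain_apply hi r (by omega), chain_apply hi r (by omega), cfun, cfun, hj, jf]
      split_ifs <;> omega
    have hlen : permLength (chainP M i r) = permLength (chainP M i r * Equiv.swap j (j + 1)) + 1 :=
      desc_s hfix (by omega) hdesc
    have hax := hS.2 (chainP M i r) j hlen
    rw [ih (by omega)] at hax
    have hcond : af M i r j = af M i r (j + 1) + 1 := by
      simp only [af, ← hj]
      rw [if_neg (by rintro ⟨h1, -⟩; omega), if_neg (by rintro ⟨h1, -⟩; omega)]
      omega
    have hstep := monomial_dd_step (n := M + 1) (j := j) (by omega) (af M i r) hcond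
    have hPnext : Pm M i (r + 1) = ∏ l ∈ range (M + 1),
        (X l : MvPolynomial ℕ ℤ) ^ (if l = j then af M i r (j + 1) else af M i r l) := by
      apply Finset.prod_congr rfl
      intro l _
      congr 1
      simp only [af, hj, jf]
      split_ifs <;> omega
    simp only [Pm] at hax
    rw [hstep] at hax
    show S (chainP M i r * Equiv.swap j (j + 1)) = _
    rw [hPnext]
    apply dd_cancel (m := j)
    simp only [dd] at hax ⊢
    exact hax

lemma chain_end {M i : ℕ} (hi : i < M) : chainP M i (M - 1) = w0 M * Equiv.swap i M := by
  apply Equiv.ext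
  intro x
  rw [chain_apply hi (M - 1) le_rfl, Equiv.Perm.mul_apply, w0_apply, cfun, Equiv.swap_apply_def]
  split_ifs <;> omega

lemma Pm_end {M i : ℕ} (hi : i < M) :
    Pm M i (M - 1) = (∏ l ∈ range M, (X l : MvPolynomial ℕ ℤ) ^ (M - 1 - l)) * X i := by
  rw [Pm, Finset.prod_range_succ]
  have hlast : af M i (M - 1) M = 0 := by
    simp only [af, jf]
    split_ifs <;> omega
  rw [hlast, pow_zero, mul_one]
  have hsplit : ∀ l ∈ range M, (X l : MvPolynomial ℕ ℤ) ^ af M i (M - 1) l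
      = (X l : MvPolynomial ℕ ℤ) ^ (M - 1 - l) * (if l = i then X l else 1) := by
    intro l hl
    simp only [Finset.mem_range] at hl
    rcases eq_or_ne l i with rfl | hne
    · rw [if_pos rfl]
      have hexp : af M l (M - 1) l = (M - 1 - l) + 1 := by
        simp only [af, jf]
        split_ifs <;> omega
      rw [hexp, pow_succ]
    · rw [if_neg hne, mul_one]
      congr 1
      simp only [af, jf]
      split_ifs <;> omega
  rw [Finset.prod_congr rfl hsplit, Finset.prod_mul_distrib]
  congr 1
  rw [Finset.prod_ite_eq' (range M) i (fun l => (X l : MvPolynomial ℕ ℤ))]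
  rw [if_pos (by simp only [Finset.mem_range]; omega)]

lemma w0_fixed (M : ℕ) : FixedFrom (w0 M) M := by
  intro x hx
  rw [w0_apply, if_neg (by omega)]

lemma monk_w0 (hS : IsSchubertFamily S) {M k : ℕ} (hk1 : 1 ≤ k) (hkM : k ≤ M) :
    S (w0 M) * ee k = ∑ p ∈ covF (w0 M) k M, S (w0 M * Equiv.swap p.1 p.2) := by
  have hfix : FixedFrom (w0 M) M := w0_fixed M
  have hcov : covF (w0 M) k M = (range k).image (fun a => (a, M)) := by
    ext ⟨x, y⟩
    simp only [covF, Finset.mem_filter, Finset.mem_product, Finset.mem_range, Finset.mem_image,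
      Prod.mk.injEq]
    constructor
    · rintro ⟨⟨hx, hy⟩, h1, h2, h3⟩
      have hxy : x < y := by omega
      have hy' : y = M := by
        by_contra hne
        rcases Nat.lt_or_ge y M with hlt | hge
        · have hwlt := cover_lt hfix hxy hlt h3
          rw [w0_apply, w0_apply, if_pos (by omega), if_pos (by omega)] at hwlt
          omega
        · have hfix2 : FixedFrom (w0 M) (y + 1) := hfix.mono (by omega)
          have hmid := cover_nomid hfix2 hxy (by omega) h3 M (by omega) (by omega)
          apply hmid
          rw [w0_apply, w0_apply, w0_apply, if_pos (by omega), if_neg (by omega),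
            if_neg (by omega)]
          omega
      exact ⟨x, h1, rfl, hy'.symm⟩
    · rintro ⟨a, ha, h1, h2⟩
      subst h1
      subst h2
      have hfix2 : FixedFrom (w0 M) (M + 1) := hfix.mono (by omega)
      refine ⟨⟨by omega, by omega⟩, by omega, by omega, ?_⟩
      apply mk_cover hfix2 (by omega) (by omega)
      · rw [w0_apply, w0_apply, if_pos (by omega), if_neg (by omega)]
        omega
      · intro c h1 h2 h3
        rw [w0_apply, w0_apply, w0_apply, if_pos (by omega), if_pos (by omega),
          if_neg (by omega)] at h3
        omega
  rw [hcov, Finset.sum_image (by intro a _ b _ h; simpa using h)]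
  have hterm : ∀ a ∈ range k, S (w0 M * Equiv.swap a M)
      = (∏ l ∈ range M, (X l : MvPolynomial ℕ ℤ) ^ (M - 1 - l)) * X a := by
    intro a ha
    simp only [Finset.mem_range] at ha
    have haM : a < M := by omega
    rw [← chain_end haM, chain_poly hS haM (M - 1) le_rfl, Pm_end haM]
  rw [Finset.sum_congr rfl hterm, hS.1 M, ee, Finset.mul_sum]

end ChainPoly
end MonkAux


namespace MonkAux
open Finset Equiv MvPolynomial

section StepHelpers

variable {u : Equiv.Perm ℕ} {N m a b : ℕ}

lemma cover_up (hfix : FixedFrom u N) (hab : a < b) (hbN : b < N) (hmN : m + 1 < N)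
    (hasc : u m < u (m + 1)) (hne : ¬(a = m ∧ b = m + 1))
    (hcov : permLength (u * Equiv.swap a b) = permLength u + 1) :
    (u * Equiv.swap a b) m < (u * Equiv.swap a b) (m + 1) := by
  have hlt := cover_lt hfix hab hbN hcov
  have hnm := cover_nomid hfix hab hbN hcov
  rw [Equiv.Perm.mul_apply, Equiv.Perm.mul_apply]
  rcases eq_or_ne a m with rfl | ham
  · have hbne : b ≠ a + 1 := fun h => hne ⟨rfl, h⟩
    have hb1 : a + 1 < b := by omega
    rw [Equiv.swap_apply_left, Equiv.swap_apply_of_ne_of_ne (by omega) (by omega)]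
    have hc := hnm (a + 1) (by omega) (by omega)
    have hib : u (a + 1) ≠ u b := fun h => by have := u.injective h; omega
    omega
  · rcases eq_or_ne b m with rfl | hbm
    · rw [Equiv.swap_apply_right, Equiv.swap_apply_of_ne_of_ne (by omega) (by omega)]
      omega
    · rcases eq_or_ne a (m + 1) with rfl | ham1
      · rw [Equiv.swap_apply_left, Equiv.swap_apply_of_ne_of_ne (by omega) (by omega)]
        omega
      · rcases eq_or_ne b (m + 1) with rfl | hbm1
        · have haml : a < m := by omega
          rw [Equiv.swap_apply_right, Equiv.swap_apply_of_ne_of_ne (by omega) (by omega)]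
          have hc := hnm m (by omega) (by omega)
          have hia : u m ≠ u a := fun h => by have := u.injective h; omega
          omega
        · rw [Equiv.swap_apply_of_ne_of_ne (Ne.symm ham) (Ne.symm hbm),
            Equiv.swap_apply_of_ne_of_ne (Ne.symm ham1) (Ne.symm hbm1)]
          exact hasc

/-- conjugated transposition: `t_{sp(p)} = s_m t_p s_m`. -/
lemma T_sp {p : ℕ × ℕ} (hp : p.1 < p.2) (m : ℕ) :
    Equiv.swap (sp m (m + 1) p).1 (sp m (m + 1) p).2
      = Equiv.swap m (m + 1) * Equiv.swap p.1 p.2 * Equiv.swap m (m + 1) := by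
  have hbase := Equiv.swap_apply_apply (Equiv.swap m (m + 1)) p.1 p.2
  rw [Equiv.swap_inv] at hbase
  rw [sp]
  split_ifs with h
  · exact hbase
  · rw [Equiv.swap_comm]
    exact hbase

lemma conj_mul (u : Equiv.Perm ℕ) {p : ℕ × ℕ} (hp : p.1 < p.2) (m : ℕ) :
    (u * Equiv.swap m (m + 1)) * Equiv.swap (sp m (m + 1) p).1 (sp m (m + 1) p).2
      = (u * Equiv.swap p.1 p.2) * Equiv.swap m (m + 1) := by
  rw [T_sp hp m]
  simp only [mul_assoc, Equiv.swap_mul_self_mul]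

lemma sp_le {q : ℕ × ℕ} {M : ℕ} (hq1 : q.1 ≤ M) (hq2 : q.2 ≤ M) (hm : m + 1 ≤ M) :
    (sp m (m + 1) q).1 ≤ M ∧ (sp m (m + 1) q).2 ≤ M := by
  simp only [sp, swap_eq_ite]
  split_ifs <;> constructor <;> dsimp only <;> omega

lemma cond_sp_iff {k : ℕ} {p : ℕ × ℕ} (hp : p.1 < p.2) (hk : k ≠ m + 1) :
    ((sp m (m + 1) p).1 < k ∧ k ≤ (sp m (m + 1) p).2) ↔ (p.1 < k ∧ k ≤ p.2) := by
  simp only [sp, swap_eq_ite]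
  split_ifs <;> dsimp only <;> omega

lemma sp_ne_sm {p : ℕ × ℕ} (hp : p.1 < p.2) (hne : p ≠ (m, m + 1)) :
    sp m (m + 1) p ≠ (m, m + 1) := by
  intro h
  apply hne
  have := sp_sp (show m < m + 1 by omega) hp
  rw [h] at this
  rw [← this, sp, Equiv.swap_apply_left, Equiv.swap_apply_right]
  norm_num

end StepHelpers
end MonkAux


namespace MonkAux
open Finset Equiv MvPolynomial

section Step
variable {S : Equiv.Perm ℕ → MvPolynomial ℕ ℤ}

lemma mul_swap_swap (g : Equiv.Perm ℕ) (i j : ℕ) :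
    g * Equiv.swap i j * Equiv.swap i j = g := by
  rw [mul_assoc, Equiv.swap_mul_self, mul_one]

set_option maxHeartbeats 3200000 in
lemma monk_step (hS : IsSchubertFamily S) {M m k : ℕ} (hm2 : m + 2 ≤ M) (hk1 : 1 ≤ k)
    (hkM : k ≤ M) {u : Equiv.Perm ℕ} (hfixu : FixedFrom u M) (hasc : u m < u (m + 1))
    (IH : ∀ j, j ≤ M → S (u * Equiv.swap m (m + 1)) * ee j
        = ∑ p ∈ covF (u * Equiv.swap m (m + 1)) j M,
            S ((u * Equiv.swap m (m + 1)) * Equiv.swap p.1 p.2)) :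
    S u * ee k = ∑ p ∈ covF u k M, S (u * Equiv.swap p.1 p.2) := by
  set w : Equiv.Perm ℕ := u * Equiv.swap m (m + 1) with hw
  have hfixu' : FixedFrom u (M + 1) := hfixu.mono (by omega)
  have hfixw : FixedFrom w M := hfixu.mul_swap (by omega) (by omega)
  have hfixw' : FixedFrom w (M + 1) := hfixw.mono (by omega)
  have hws : w * Equiv.swap m (m + 1) = u := by
    rw [hw, mul_assoc, Equiv.swap_mul_self, mul_one]
  have hlenw : permLength w = permLength u + 1 := asc_s hfixu (by omega) hasc
  have haxw : dd m * S u = S w - rename (⇑(Equiv.swap m (m + 1))) (S w) := by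
    have h := hS.2 w m (by rw [hws]; omega)
    rw [hws] at h
    simpa [dd] using h
  set E : Finset (ℕ × ℕ) := ((range M) ×ˢ (range (M + 1))).filter
    (fun p => p.1 < p.2 ∧ permLength (u * Equiv.swap p.1 p.2) = permLength u + 1
      ∧ p ≠ (m, m + 1)) with hE
  have hEmem : ∀ p : ℕ × ℕ, p ∈ E ↔ (p.1 < M ∧ p.2 ≤ M ∧ p.1 < p.2 ∧
      permLength (u * Equiv.swap p.1 p.2) = permLength u + 1 ∧ p ≠ (m, m + 1)) := by
    intro p
    simp only [hE, Finset.mem_filter, Finset.mem_product, Finset.mem_range]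
    constructor
    · rintro ⟨⟨h1, h2⟩, h3, h4, h5⟩
      exact ⟨h1, by omega, h3, h4, h5⟩
    · rintro ⟨h1, h2, h3, h4, h5⟩
      exact ⟨⟨h1, by omega⟩, h3, h4, h5⟩
  have hup : ∀ q ∈ E, (u * Equiv.swap q.1 q.2) m < (u * Equiv.swap q.1 q.2) (m + 1) := by
    intro q hq
    rw [hEmem] at hq
    obtain ⟨h1, h2, h3, h4, h5⟩ := hq
    exact cover_up hfixu' h3 (by omega) (by omega) hasc
      (fun hc => h5 (Prod.ext hc.1 hc.2)) h4
  have hfixv : ∀ q ∈ E, FixedFrom (u * Equiv.swap q.1 q.2) (M + 1) := by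
    intro q hq
    rw [hEmem] at hq
    exact hfixu'.mul_swap (by omega) (by omega)
  have hupv : ∀ q ∈ E, permLength ((u * Equiv.swap q.1 q.2) * Equiv.swap m (m + 1))
      = permLength (u * Equiv.swap q.1 q.2) + 1 := fun q hq =>
    asc_s (hfixv q hq) (by omega) (hup q hq)
  have hconj : ∀ q : ℕ × ℕ, q.1 < q.2 →
      w * Equiv.swap (sp m (m + 1) q).1 (sp m (m + 1) q).2
        = (u * Equiv.swap q.1 q.2) * Equiv.swap m (m + 1) := fun q hq => conj_mul u hq m
  have hD : ∀ q ∈ E, dd m * S (u * Equiv.swap q.1 q.2)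
      = S (w * Equiv.swap (sp m (m + 1) q).1 (sp m (m + 1) q).2)
        - rename (⇑(Equiv.swap m (m + 1)))
            (S (w * Equiv.swap (sp m (m + 1) q).1 (sp m (m + 1) q).2)) := by
    intro q hq
    have hq' := hq
    rw [hEmem] at hq'
    rw [hconj q hq'.2.2.1]
    have hax := hS.2 ((u * Equiv.swap q.1 q.2) * Equiv.swap m (m + 1)) m
      (by rw [mul_swap_swap]; exact hupv q hq)
    rw [mul_swap_swap] at hax
    simpa [dd] using hax
  -- the reindexing identity for each j
  have hIdent : ∀ j, j ≤ M →
      ∑ q ∈ E.filter (fun q => (sp m (m + 1) q).1 < j ∧ j ≤ (sp m (m + 1) q).2),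
          (S (w * Equiv.swap (sp m (m + 1) q).1 (sp m (m + 1) q).2)
            - rename (⇑(Equiv.swap m (m + 1)))
                (S (w * Equiv.swap (sp m (m + 1) q).1 (sp m (m + 1) q).2)))
        = S w * ee j - rename (⇑(Equiv.swap m (m + 1))) (S w * ee j) := by
    intro j hj
    rw [IH j hj, map_sum, ← Finset.sum_sub_distrib]
    rw [← Finset.sum_filter_add_sum_filter_not (covF w j M)
      (fun r => permLength (w * Equiv.swap r.1 r.2 * Equiv.swap m (m + 1)) = permLength w)]
    have hcovmem : ∀ r : ℕ × ℕ, r ∈ covF w j M ↔ (r.1 < M ∧ r.2 ≤ M ∧ r.1 < j ∧ j ≤ r.2 ∧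
        permLength (w * Equiv.swap r.1 r.2) = permLength w + 1) := by
      intro r
      simp only [covF, Finset.mem_filter, Finset.mem_product, Finset.mem_range]
      constructor
      · rintro ⟨⟨h1, h2⟩, h3, h4, h5⟩
        exact ⟨h1, by omega, h3, h4, h5⟩
      · rintro ⟨h1, h2, h3, h4, h5⟩
        exact ⟨⟨h1, by omega⟩, h3, h4, h5⟩
    have hupzero : ∑ r ∈ (covF w j M).filter
        (fun r => ¬ permLength (w * Equiv.swap r.1 r.2 * Equiv.swap m (m + 1)) = permLength w),
          (S (w * Equiv.swap r.1 r.2)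
            - rename (⇑(Equiv.swap m (m + 1))) (S (w * Equiv.swap r.1 r.2))) = 0 := by
      apply Finset.sum_eq_zero
      intro r hr
      rw [Finset.mem_filter] at hr
      obtain ⟨hr1, hr2⟩ := hr
      rw [hcovmem] at hr1
      obtain ⟨h1, h2, h3, h4, h5⟩ := hr1
      have hfixr : FixedFrom (w * Equiv.swap r.1 r.2) (M + 1) :=
        hfixw'.mul_swap (by omega) (by omega)
      have hnei : (w * Equiv.swap r.1 r.2) m ≠ (w * Equiv.swap r.1 r.2) (m + 1) :=
        fun h => by have := (w * Equiv.swap r.1 r.2).injective h; omega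
      have hasc2 : (w * Equiv.swap r.1 r.2) m < (w * Equiv.swap r.1 r.2) (m + 1) := by
        rcases Nat.lt_or_ge ((w * Equiv.swap r.1 r.2) m) ((w * Equiv.swap r.1 r.2) (m + 1))
          with h | h
        · exact h
        · exfalso
          apply hr2
          have hdlt : (w * Equiv.swap r.1 r.2) (m + 1) < (w * Equiv.swap r.1 r.2) m := by
            omega
          have := desc_s (m := m) hfixr (by omega) hdlt
          omega
      rw [sym_of_asc hS (asc_s hfixr (by omega) hasc2), sub_self]
    rw [hupzero, add_zero]
    symm
    apply Finset.sum_nbij' (fun r => sp m (m + 1) r) (fun q => sp m (m + 1) q)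
    · -- maps into E.filter
      intro r hr
      rw [Finset.mem_filter] at hr
      obtain ⟨hr1, hr2⟩ := hr
      rw [hcovmem] at hr1
      obtain ⟨h1, h2, h3, h4, h5⟩ := hr1
      have hr12 : r.1 < r.2 := by omega
      have hss := sp_sp (show m < m + 1 by omega) hr12
      have huTq : u * Equiv.swap (sp m (m + 1) r).1 (sp m (m + 1) r).2
          = (w * Equiv.swap r.1 r.2) * Equiv.swap m (m + 1) := by
        have h := hconj (sp m (m + 1) r) (sp_fst_lt_snd (by omega) hr12)
        rw [hss] at h
        have h2 := congrArg (fun g => g * Equiv.swap m (m + 1)) h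
        rw [mul_swap_swap] at h2
        exact h2.symm
      rw [Finset.mem_filter, hEmem]
      obtain ⟨g1, g2⟩ := sp_le (m := m) (by omega : r.1 ≤ M) h2 (by omega)
      have hsrt := sp_fst_lt_snd (show m < m + 1 by omega) hr12
      refine ⟨⟨by omega, g2, hsrt, ?_, ?_⟩, ?_⟩
      · rw [huTq, hr2]
        omega
      · intro hcon
        have hrm : r = (m, m + 1) := by
          rw [← hss, hcon, sp, Equiv.swap_apply_left, Equiv.swap_apply_right,
            if_neg (by omega)]
        rw [hrm] at h5
        dsimp only at h5
        rw [hws] at h5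
        omega
      · rw [hss]
        exact ⟨h3, h4⟩
    · -- reverse map into drop-filter
      intro q hq
      rw [Finset.mem_filter] at hq
      obtain ⟨hq1, hq2⟩ := hq
      have hq' := hq1
      rw [hEmem] at hq'
      obtain ⟨h1, h2, h3, h4, h5⟩ := hq'
      have hwT : w * Equiv.swap (sp m (m + 1) q).1 (sp m (m + 1) q).2
          = (u * Equiv.swap q.1 q.2) * Equiv.swap m (m + 1) := hconj q h3
      rw [Finset.mem_filter, hcovmem]
      obtain ⟨g1, g2⟩ := sp_le (m := m) (by omega : q.1 ≤ M) h2 (by omega)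
      have hsrt := sp_fst_lt_snd (show m < m + 1 by omega) h3
      refine ⟨⟨by omega, g2, hq2.1, hq2.2, ?_⟩, ?_⟩
      · rw [hwT, hupv q hq1, h4, hlenw]
      · rw [hwT, mul_swap_swap, h4, hlenw]
    · intro r hr
      rw [Finset.mem_filter] at hr
      obtain ⟨hr1, -⟩ := hr
      rw [hcovmem] at hr1
      exact sp_sp (by omega) (by omega)
    · intro q hq
      rw [Finset.mem_filter] at hq
      have hq' := hq.1
      rw [hEmem] at hq'
      exact sp_sp (by omega) hq'.2.2.1
    · intro r hr
      rw [Finset.mem_filter] at hr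
      obtain ⟨hr1, -⟩ := hr
      rw [hcovmem] at hr1
      have hss := sp_sp (show m < m + 1 by omega) (show r.1 < r.2 by omega)
      rw [hss]
  -- assemble
  rcases eq_or_ne k (m + 1) with rfl | hkm
  · -- wall case k = m + 1
    have hmm1 : ((m, m + 1) : ℕ × ℕ) ∉ E.filter (fun q => q.1 < m + 1 ∧ m + 1 ≤ q.2) := by
      intro hcon
      rw [Finset.mem_filter, hEmem] at hcon
      exact hcon.1.2.2.2.2 rfl
    have hCov : covF u (m + 1) M
        = insert (m, m + 1) (E.filter (fun q => q.1 < m + 1 ∧ m + 1 ≤ q.2)) := by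
      ext p
      simp only [covF, Finset.mem_filter, Finset.mem_product, Finset.mem_range,
        Finset.mem_insert, hEmem]
      constructor
      · rintro ⟨⟨h1, h2⟩, h3, h4, h5⟩
        rcases eq_or_ne p (m, m + 1) with rfl | hne
        · exact Or.inl rfl
        · exact Or.inr ⟨⟨h1, by omega, by omega, h5, hne⟩, h3, h4⟩
      · rintro (rfl | ⟨⟨h1, h2, h3, h4, h5⟩, h6, h7⟩)
        · refine ⟨⟨by omega, by omega⟩, by omega, by omega, ?_⟩
          dsimp only
          exact hlenw
        · exact ⟨⟨h1, by omega⟩, h6, h7, h4⟩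
    have hIm := hIdent m (by omega)
    have hIm1 := hIdent (m + 1) (by omega)
    have hIm2 := hIdent (m + 2) (by omega)
    have hIND : ∀ q ∈ E,
        (if q.1 < m + 1 ∧ m + 1 ≤ q.2 then
            (S (w * Equiv.swap (sp m (m + 1) q).1 (sp m (m + 1) q).2)
              - rename (⇑(Equiv.swap m (m + 1)))
                  (S (w * Equiv.swap (sp m (m + 1) q).1 (sp m (m + 1) q).2))) else 0)
          + (if (sp m (m + 1) q).1 < m + 1 ∧ m + 1 ≤ (sp m (m + 1) q).2 then
            (S (w * Equiv.swap (sp m (m + 1) q).1 (sp m (m + 1) q).2)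
              - rename (⇑(Equiv.swap m (m + 1)))
                  (S (w * Equiv.swap (sp m (m + 1) q).1 (sp m (m + 1) q).2))) else 0)
        = (if (sp m (m + 1) q).1 < m ∧ m ≤ (sp m (m + 1) q).2 then
            (S (w * Equiv.swap (sp m (m + 1) q).1 (sp m (m + 1) q).2)
              - rename (⇑(Equiv.swap m (m + 1)))
                  (S (w * Equiv.swap (sp m (m + 1) q).1 (sp m (m + 1) q).2))) else 0)
          + (if (sp m (m + 1) q).1 < m + 2 ∧ m + 2 ≤ (sp m (m + 1) q).2 then
            (S (w * Equiv.swap (sp m (m + 1) q).1 (sp m (m + 1) q).2)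
              - rename (⇑(Equiv.swap m (m + 1)))
                  (S (w * Equiv.swap (sp m (m + 1) q).1 (sp m (m + 1) q).2))) else 0) := by
      intro q hq
      rw [hEmem] at hq
      obtain ⟨h1, h2, h3, h4, h5⟩ := hq
      have hnep : ¬(q.1 = m ∧ q.2 = m + 1) := fun hc => h5 (Prod.ext hc.1 hc.2)
      generalize (S (w * Equiv.swap (sp m (m + 1) q).1 (sp m (m + 1) q).2)
              - rename (⇑(Equiv.swap m (m + 1)))
                  (S (w * Equiv.swap (sp m (m + 1) q).1 (sp m (m + 1) q).2))) = D
      simp only [sp, swap_eq_ite]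
      split_ifs <;> first | omega | ring
    have hINDsum := Finset.sum_congr rfl hIND
    rw [Finset.sum_add_distrib, Finset.sum_add_distrib, ← Finset.sum_filter, ← Finset.sum_filter,
      ← Finset.sum_filter, ← Finset.sum_filter] at hINDsum
    rw [hIm, hIm1, hIm2] at hINDsum
    rw [map_mul, map_mul, map_mul, sigma_ee_ne (show m ≠ m + 1 by omega),
      sigma_ee_eq, sigma_ee_ne (show m + 2 ≠ m + 1 by omega)] at hINDsum
    have he2 : ee (m + 2) = ee (m + 1) + X (m + 1) := by rw [ee, ee, Finset.sum_range_succ]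
    have he1 : ee (m + 1) = ee m + X m := by rw [ee, ee, Finset.sum_range_succ]
    have hr5 : ee m + ee (m + 2) = 2 * ee (m + 1) - dd m := by
      rw [he2, he1]
      simp only [dd]
      ring
    apply dd_cancel (m := m)
    rw [hCov, Finset.sum_insert hmm1,
      show u * Equiv.swap ((m, m + 1) : ℕ × ℕ).1 ((m, m + 1) : ℕ × ℕ).2 = w from rfl,
      mul_add, Finset.mul_sum,
      Finset.sum_congr rfl (fun q hq => hD q (Finset.mem_filter.mp hq).1)]
    linear_combination (-1 : MvPolynomial ℕ ℤ) * hINDsum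
      + (dd m + ee m + ee (m + 2) - ee (m + 1)) * haxw - (dd m * S u) * hr5
  · -- easy case
    have hCov : covF u k M = E.filter (fun q => q.1 < k ∧ k ≤ q.2) := by
      ext p
      simp only [covF, Finset.mem_filter, Finset.mem_product, Finset.mem_range, hEmem]
      constructor
      · rintro ⟨⟨h1, h2⟩, h3, h4, h5⟩
        refine ⟨⟨h1, by omega, by omega, h5, ?_⟩, h3, h4⟩
        intro hcon
        rw [hcon] at h3 h4
        dsimp only at h3 h4
        omega
      · rintro ⟨⟨h1, h2, h3, h4, h5⟩, h6, h7⟩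
        exact ⟨⟨h1, by omega⟩, h6, h7, h4⟩
    have hfeq : E.filter (fun q => q.1 < k ∧ k ≤ q.2)
        = E.filter (fun q => (sp m (m + 1) q).1 < k ∧ k ≤ (sp m (m + 1) q).2) := by
      apply Finset.filter_congr
      intro q hq
      rw [hEmem] at hq
      exact (cond_sp_iff hq.2.2.1 hkm).symm
    apply dd_cancel (m := m)
    rw [hCov, hfeq, Finset.mul_sum]
    rw [Finset.sum_congr rfl (fun q hq => hD q (Finset.mem_filter.mp hq).1)]
    rw [hIdent k hkM]
    rw [← mul_assoc, haxw, map_mul, sigma_ee_ne hkm]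
    ring


end Step
end MonkAux


namespace MonkAux
open Finset Equiv MvPolynomial

section Main
variable {S : Equiv.Perm ℕ → MvPolynomial ℕ ℤ}

lemma permLength_lt {u : Equiv.Perm ℕ} {M : ℕ} (h : FixedFrom u M) (hM : 1 ≤ M) :
    permLength u < M * M := by
  rw [permLength_eq_card h]
  have hsub : invF u M ⊂ (range M) ×ˢ (range M) := by
    constructor
    · exact Finset.filter_subset _ _
    · intro hcon
      have h00 : ((0, 0) : ℕ × ℕ) ∈ (range M) ×ˢ (range M) := by
        simp only [Finset.mem_product, Finset.mem_range]
        omega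
      have := hcon h00
      simp only [invF, Finset.mem_filter] at this
      omega
  calc (invF u M).card < ((range M) ×ˢ (range M)).card := Finset.card_lt_card hsub
  _ = M * M := by simp

lemma perm_eq_w0 {u : Equiv.Perm ℕ} {M : ℕ} (hfix : FixedFrom u M)
    (hdec : ∀ m, m + 2 ≤ M → ¬ u m < u (m + 1)) : u = w0 M := by
  have hadj : ∀ m, m + 1 < M → u (m + 1) < u m := by
    intro m hm
    have h1 := hdec m (by omega)
    have h2 : u m ≠ u (m + 1) := fun h => by have := u.injective h; omega
    omega
  have hchain : ∀ d a, a + d < M → u (a + d) + d ≤ u a := by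
    intro d
    induction d with
    | zero =>
      intro a _
      simp
    | succ d ih =>
      intro a ha
      have h1 := ih (a + 1) (by omega)
      have h2 := hadj a (by omega)
      have : a + 1 + d = a + (d + 1) := by omega
      rw [this] at h1
      omega
  have key : ∀ x, x < M → u x = M - 1 - x := by
    intro x hx
    have hge : M - 1 - x + u (M - 1) ≤ u x := by
      have := hchain (M - 1 - x) x (by omega)
      have he : x + (M - 1 - x) = M - 1 := by omega
      rw [he] at this
      omega
    have hle : u x + x ≤ u 0 := by
      have := hchain x 0 (by omega)
      simpa using this
    have hu0 : u 0 < M := hfix.lt (by omega)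
    have hux : u x < M := hfix.lt hx
    omega
  apply Equiv.ext
  intro x
  rw [w0_apply]
  rcases Nat.lt_or_ge x M with hx | hx
  · rw [if_pos hx]
    exact key x hx
  · rw [if_neg (by omega)]
    exact hfix x hx

lemma monk_all (hS : IsSchubertFamily S) (M : ℕ) :
    ∀ c : ℕ, ∀ u : Equiv.Perm ℕ, FixedFrom u M → M * M ≤ permLength u + c →
      ∀ k, 1 ≤ k → k ≤ M →
      S u * ee k = ∑ p ∈ covF u k M, S (u * Equiv.swap p.1 p.2) := by
  intro c
  induction c with
  | zero =>
    intro u hfix hbound k hk1 hkM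
    have := permLength_lt hfix (by omega)
    omega
  | succ c ih =>
    intro u hfix hbound k hk1 hkM
    by_cases hasc : ∃ m, m + 2 ≤ M ∧ u m < u (m + 1)
    · obtain ⟨m, hm2, hmasc⟩ := hasc
      apply monk_step hS hm2 hk1 hkM hfix hmasc
      intro j hj
      rcases Nat.eq_zero_or_pos j with rfl | hj1
      · rw [ee, Finset.range_zero, Finset.sum_empty, mul_zero]
        symm
        apply Finset.sum_eq_zero
        intro p hp
        exfalso
        simp only [covF, Finset.mem_filter] at hp
        omega
      · have hlen : permLength (u * Equiv.swap m (m + 1)) = permLength u + 1 :=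
          asc_s hfix (by omega) hmasc
        exact ih (u * Equiv.swap m (m + 1)) (hfix.mul_swap (by omega) (by omega))
          (by omega) j hj1 hj
    · push_neg at hasc
      have hu0 : u = w0 M := perm_eq_w0 hfix (fun m hm => by have := hasc m hm; omega)
      rw [hu0]
      exact monk_w0 hS hk1 hkM

end Main
end MonkAux


/-- Monk's formula: `𝔖_u · (z_1 + ⋯ + z_k) = Σ 𝔖_{u t_{ij}}`, the sum
over all transpositions `t_{ij}` with `i ≤ k < j` (0-indexed: `i < k ≤ j`) and
`ℓ(u t_{ij}) = ℓ(u) + 1`. -/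
theorem monk_formula
    (S : Equiv.Perm ℕ → MvPolynomial ℕ ℤ) (hS : IsSchubertFamily S)
    (u : Equiv.Perm ℕ) (hu : PermFinSupp u) (k : ℕ) (hk : 0 < k) :
    S u * (∑ i ∈ Finset.range k, (MvPolynomial.X i : MvPolynomial ℕ ℤ)) =
      ∑ᶠ p ∈ {p : ℕ × ℕ | p.1 < k ∧ k ≤ p.2 ∧
          permLength (u * Equiv.swap p.1 p.2) = permLength u + 1},
        S (u * Equiv.swap p.1 p.2) := by
  obtain ⟨B, hB⟩ := Set.Finite.bddAbove hu
  have hfix0 : MonkAux.FixedFrom u (B + 1) := by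
    intro x hx
    by_contra hne
    have hmem : x ∈ {i : ℕ | u i ≠ i} := hne
    have := hB hmem
    omega
  set M := max (B + 1) k with hM
  have hfix : MonkAux.FixedFrom u M := hfix0.mono (le_max_left _ _)
  have hkM : k ≤ M := le_max_right _ _
  have key := MonkAux.monk_all hS M (M * M) u hfix (by omega) k hk hkM
  have hset : {p : ℕ × ℕ | p.1 < k ∧ k ≤ p.2 ∧
      permLength (u * Equiv.swap p.1 p.2) = permLength u + 1}
      = ↑(MonkAux.covF u k M) := MonkAux.covSet_eq hfix hkM
  rw [hset, finsum_mem_coe_finset]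
  exact key

end
end

section
/- For any partition λ of n, the quasisymmetric generating function of standard Young tableaux of shape λ by descents equals the Schur function: Σ_T Q_{Des(T)} = s_λ, where the sum is over all standard Young tableaux T of shape λ and Des(T) = {i ∈ {1,…,n−1} : i+1 lies in a higher row than i in T}. -/
open MvPolynomial

noncomputable section

/-! ### Auxiliary development for Statement 16 -/

namespace Syt16

open Finset

variable {lam : YoungDiagram}

abbrev Cell (lam : YoungDiagram) := {c : ℕ × ℕ // c ∈ lam.cells}

lemma card_cell (lam : YoungDiagram) : Fintype.card (Cell lam) = lam.card :=
  Fintype.card_coe _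

lemma cell_mem (c : Cell lam) : (c.1.1, c.1.2) ∈ lam := by
  exact (YoungDiagram.mem_cells _).mp c.2

lemma mem_sytDes {T : SemistandardYoungTableau lam} {i : ℕ} :
    i ∈ sytDes lam T ↔ (1 ≤ i ∧ i < lam.card) ∧
      ∃ c ∈ lam.cells, ∃ d ∈ lam.cells, T c.1 c.2 = i - 1 ∧ T d.1 d.2 = i ∧ c.1 < d.1 := by
  classical
  rw [sytDes, Finset.mem_filter, Finset.mem_Ico]

/-- Two distinct cells: if values equal and column of `c` smaller, then the row of `d`
is at most the row of `c`. -/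
lemma row_le_of_eq_val (S : SemistandardYoungTableau lam) {c d : Cell lam}
    (hv : S c.1.1 c.1.2 = S d.1.1 d.1.2) (hcol : c.1.2 < d.1.2) : d.1.1 ≤ c.1.1 := by
  by_contra h
  push_neg at h
  have hmem : (c.1.1, d.1.2) ∈ lam := lam.up_left_mem (le_of_lt h) le_rfl (cell_mem d)
  have h1 : S c.1.1 d.1.2 < S d.1.1 d.1.2 := S.col_strict h (cell_mem d)
  have h2 : S c.1.1 c.1.2 ≤ S c.1.1 d.1.2 := S.row_weak_of_le hcol.le hmem
  omega

section Std

variable {T : SemistandardYoungTableau lam}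

noncomputable def stdCell (hT : IsStandardSyt lam T) (m : Fin lam.card) : Cell lam :=
  ⟨(hT m m.2).exists.choose, ((hT m m.2).exists.choose_spec).1⟩

lemma stdCell_val (hT : IsStandardSyt lam T) (m : Fin lam.card) :
    T (stdCell hT m).1.1 (stdCell hT m).1.2 = m :=
  ((hT m m.2).exists.choose_spec).2

lemma cell_eq_of_val (hT : IsStandardSyt lam T) {c d : Cell lam}
    (h : T c.1.1 c.1.2 = T d.1.1 d.1.2) (hlt : T c.1.1 c.1.2 < lam.card) : c = d := by
  have h1 : c.1 ∈ lam.cells ∧ T c.1.1 c.1.2 = T c.1.1 c.1.2 := ⟨c.2, rfl⟩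
  have h2 : d.1 ∈ lam.cells ∧ T d.1.1 d.1.2 = T c.1.1 c.1.2 := ⟨d.2, h.symm⟩
  exact Subtype.ext ((hT _ hlt).unique h1 h2)

lemma stdCell_bij (hT : IsStandardSyt lam T) :
    Function.Bijective (stdCell hT) := by
  rw [Fintype.bijective_iff_injective_and_card]
  constructor
  · intro m m' h
    have h1 := stdCell_val hT m
    rw [h, stdCell_val hT m'] at h1
    exact Fin.ext h1.symm
  · rw [card_cell, Fintype.card_fin]

lemma std_val_lt (hT : IsStandardSyt lam T) (c : Cell lam) : T c.1.1 c.1.2 < lam.card := by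
  obtain ⟨m, hm⟩ := (stdCell_bij hT).2 c
  rw [← hm, stdCell_val]
  exact m.2

noncomputable def stdRank (hT : IsStandardSyt lam T) (c : Cell lam) : Fin lam.card :=
  ⟨T c.1.1 c.1.2, std_val_lt hT c⟩

lemma stdRank_bij (hT : IsStandardSyt lam T) : Function.Bijective (stdRank hT) := by
  rw [Fintype.bijective_iff_injective_and_card]
  constructor
  · intro c d h
    exact cell_eq_of_val hT (congrArg Fin.val h) (std_val_lt hT c)
  · rw [card_cell, Fintype.card_fin]

lemma stdCell_stdRank (hT : IsStandardSyt lam T) (c : Cell lam) :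
    stdCell hT (stdRank hT c) = c := by
  apply cell_eq_of_val hT
  · rw [stdCell_val]
    rfl
  · rw [stdCell_val]
    exact std_val_lt hT c

lemma col_lt_col_of_not_des (hT : IsStandardSyt lam T) {i : ℕ} (h1 : 1 ≤ i)
    (h2 : i < lam.card) (hnd : i ∉ sytDes lam T) :
    (stdCell hT ⟨i - 1, by omega⟩).1.2 < (stdCell hT ⟨i, h2⟩).1.2 := by
  set c := stdCell hT ⟨i - 1, by omega⟩ with hc
  set d := stdCell hT ⟨i, h2⟩ with hd
  have hvc : T c.1.1 c.1.2 = i - 1 := stdCell_val hT _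
  have hvd : T d.1.1 d.1.2 = i := stdCell_val hT _
  have hrow : ¬ c.1.1 < d.1.1 := by
    intro hlt
    exact hnd (mem_sytDes.mpr ⟨⟨h1, h2⟩, c.1, c.2, d.1, d.2, hvc, hvd, hlt⟩)
  by_contra hcol
  push_neg at hcol
  have hrow' : d.1.1 ≤ c.1.1 := not_lt.mp hrow
  rcases lt_or_eq_of_le hrow' with hlt | heq
  · have hmem : (d.1.1, c.1.2) ∈ lam := lam.up_left_mem hlt.le le_rfl (cell_mem c)
    have h3 : T d.1.1 c.1.2 < T c.1.1 c.1.2 := T.col_strict hlt (cell_mem c)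
    have h4 : T d.1.1 d.1.2 ≤ T d.1.1 c.1.2 := T.row_weak_of_le hcol hmem
    omega
  · have h4 : T d.1.1 d.1.2 ≤ T d.1.1 c.1.2 := by
      refine T.row_weak_of_le hcol ?_
      rw [heq]
      exact cell_mem c
    have h5 : T d.1.1 c.1.2 = i - 1 := by rw [heq]; exact hvc
    omega

lemma col_lt_col_of_no_des (hT : IsStandardSyt lam T) (m : ℕ) :
    ∀ m', (hm : m < m') → ∀ hm' : m' < lam.card,
      (∀ i, m < i → i ≤ m' → i ∉ sytDes lam T) →
      (stdCell hT ⟨m, by omega⟩).1.2 < (stdCell hT ⟨m', hm'⟩).1.2 := by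
  intro m'
  induction m' with
  | zero => omega
  | succ k ih =>
    intro hlt hm' hnd
    have hstep : (stdCell hT ⟨k, by omega⟩).1.2 < (stdCell hT ⟨k + 1, hm'⟩).1.2 := by
      have h := col_lt_col_of_not_des hT (i := k + 1) (by omega) hm'
        (hnd (k + 1) (by omega) le_rfl)
      have he : (⟨k + 1 - 1, by omega⟩ : Fin lam.card) = ⟨k, by omega⟩ := by
        apply Fin.ext; simp
      rwa [he] at h
    rcases Nat.lt_or_ge m k with hmk | hmk
    · exact lt_trans (ih hmk (by omega) (fun i hi1 hi2 => hnd i hi1 (by omega))) hstep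
    · have : m = k := by omega
      subst this
      exact hstep

end Std

section Rank

variable (S : SemistandardYoungTableau lam)

/-- The standardization key of a cell: its value, then its column. -/
def key (c : Cell lam) : ℕ ×ₗ ℕ := toLex (S c.1.1 c.1.2, c.1.2)

lemma key_inj : Function.Injective (key S) := by
  intro c d h
  have h' : (S c.1.1 c.1.2, c.1.2) = (S d.1.1 d.1.2, d.1.2) := toLex.injective h
  injection h' with hv hcol
  rw [hcol] at hv
  rcases lt_trichotomy c.1.1 d.1.1 with h1 | h1 | h1
  · have := S.col_strict h1 (j := d.1.2) (cell_mem d)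
    omega
  · refine Subtype.ext ?_
    rw [← Prod.mk.eta (p := c.1), ← Prod.mk.eta (p := d.1), h1, hcol]
  · have := S.col_strict h1 (j := d.1.2)
      (show (c.1.1, d.1.2) ∈ lam by rw [← hcol]; exact cell_mem c)
    omega

/-- The set of keys of all cells. -/
def keys : Finset (ℕ ×ₗ ℕ) := Finset.univ.image (key S)

lemma keys_card : (keys S).card = lam.card := by
  rw [keys, Finset.card_image_of_injective _ (key_inj S), Finset.card_univ, card_cell]

noncomputable def kIso : Fin lam.card ≃o {x // x ∈ keys S} :=
  (keys S).orderIsoOfFin (keys_card S)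

lemma key_mem (c : Cell lam) : key S c ∈ keys S :=
  Finset.mem_image_of_mem _ (Finset.mem_univ c)

/-- The standardization rank of a cell. -/
noncomputable def rank (c : Cell lam) : Fin lam.card :=
  (kIso S).symm ⟨key S c, key_mem S c⟩

lemma kIso_rank (c : Cell lam) : ((kIso S) (rank S c) : ℕ ×ₗ ℕ) = key S c := by
  rw [rank, OrderIso.apply_symm_apply]

lemma rank_lt_rank_iff {c d : Cell lam} : rank S c < rank S d ↔ key S c < key S d := by
  rw [rank, rank, (kIso S).symm.lt_iff_lt, Subtype.mk_lt_mk]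

lemma rank_bij : Function.Bijective (rank S) := by
  rw [Fintype.bijective_iff_injective_and_card]
  constructor
  · intro c d h
    exact key_inj S (congrArg Subtype.val ((kIso S).symm.injective h))
  · rw [card_cell, Fintype.card_fin]

/-- The weakly increasing word of the standardization. -/
noncomputable def fseq (j : Fin lam.card) : ℕ := (ofLex ((kIso S) j : ℕ ×ₗ ℕ)).1

lemma fseq_rank (c : Cell lam) : fseq S (rank S c) = S c.1.1 c.1.2 := by
  rw [fseq, kIso_rank]
  rfl

lemma fseq_mono : Monotone (fseq S) := by
  intro j j' h
  have h1 : ((kIso S) j : ℕ ×ₗ ℕ) ≤ ((kIso S) j' : ℕ ×ₗ ℕ) := (kIso S).le_iff_le.mpr h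
  have h2 := Prod.Lex.le_iff.mp h1
  rcases h2 with h3 | ⟨h3, _⟩
  · exact h3.le
  · exact h3.le

/-- The standardization of a semistandard tableau. -/
noncomputable def stdOf : SemistandardYoungTableau lam where
  entry i j := if h : (i, j) ∈ lam then
    (rank S ⟨(i, j), (YoungDiagram.mem_cells _).mpr h⟩ : ℕ) else 0
  row_weak' := by
    intro i j1 j2 hj hmem
    have hmem1 : (i, j1) ∈ lam := lam.up_left_mem le_rfl hj.le hmem
    simp only [dif_pos hmem1, dif_pos hmem]
    have hr : rank S ⟨(i, j1), (YoungDiagram.mem_cells _).mpr hmem1⟩ <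
        rank S ⟨(i, j2), (YoungDiagram.mem_cells _).mpr hmem⟩ := by
      rw [rank_lt_rank_iff, key, key, Prod.Lex.lt_iff]
      rcases (S.row_weak hj hmem).lt_or_eq with h | h
      · exact Or.inl h
      · exact Or.inr ⟨h, hj⟩
    exact (Fin.lt_def.mp hr).le
  col_strict' := by
    intro i1 i2 j hi hmem
    have hmem1 : (i1, j) ∈ lam := lam.up_left_mem hi.le le_rfl hmem
    simp only [dif_pos hmem1, dif_pos hmem]
    have hr : rank S ⟨(i1, j), (YoungDiagram.mem_cells _).mpr hmem1⟩ <
        rank S ⟨(i2, j), (YoungDiagram.mem_cells _).mpr hmem⟩ := by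
      rw [rank_lt_rank_iff, key, key, Prod.Lex.lt_iff]
      exact Or.inl (S.col_strict hi hmem)
    exact Fin.lt_def.mp hr
  zeros' := by
    intro i j h
    simp only [dif_neg h]

lemma stdOf_entry (c : Cell lam) : stdOf S c.1.1 c.1.2 = (rank S c : ℕ) := by
  have h : (c.1.1, c.1.2) ∈ lam := cell_mem c
  show (stdOf S).entry c.1.1 c.1.2 = _
  simp only [stdOf]
  rw [dif_pos h]

lemma stdOf_std : IsStandardSyt lam (stdOf S) := by
  intro m hm
  obtain ⟨c, hc⟩ := (rank_bij S).2 ⟨m, hm⟩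
  refine ⟨c.1, ⟨c.2, ?_⟩, ?_⟩
  · rw [stdOf_entry S c, hc]
  · rintro d ⟨hd1, hd2⟩
    have h1 : stdOf S (⟨d, hd1⟩ : Cell lam).1.1 (⟨d, hd1⟩ : Cell lam).1.2 = m := hd2
    rw [stdOf_entry S ⟨d, hd1⟩] at h1
    have h2 : rank S ⟨d, hd1⟩ = rank S c := by
      apply Fin.ext
      rw [h1, hc]
    exact congrArg Subtype.val ((rank_bij S).1 h2)

lemma fseq_strict_at_des : ∀ i : ℕ, i ∈ sytDes lam (stdOf S) → 0 < i →
    ∀ h : i < lam.card, fseq S ⟨i - 1, by omega⟩ < fseq S ⟨i, h⟩ := by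
  intro i hdes hi h
  obtain ⟨⟨h1, h2⟩, c, hc, d, hd, hvc, hvd, hrow⟩ := mem_sytDes.mp hdes
  have hrc : rank S ⟨c, hc⟩ = ⟨i - 1, by omega⟩ := by
    apply Fin.ext
    rw [show ((⟨i - 1, by omega⟩ : Fin lam.card) : ℕ) = i - 1 from rfl, ← hvc]
    exact (stdOf_entry S ⟨c, hc⟩).symm
  have hrd : rank S ⟨d, hd⟩ = ⟨i, h⟩ := by
    apply Fin.ext
    rw [show ((⟨i, h⟩ : Fin lam.card) : ℕ) = i from rfl, ← hvd]
    exact (stdOf_entry S ⟨d, hd⟩).symm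
  have hlt : rank S ⟨c, hc⟩ < rank S ⟨d, hd⟩ := by
    rw [hrc, hrd]
    exact Fin.mk_lt_mk.mpr (by omega)
  have hkey := (rank_lt_rank_iff S).mp hlt
  rw [key, key, Prod.Lex.lt_iff] at hkey
  have hval : S c.1 c.2 < S d.1 d.2 := by
    rcases hkey with h' | ⟨h', hcol⟩
    · exact h'
    · exact absurd (row_le_of_eq_val S (c := ⟨c, hc⟩) (d := ⟨d, hd⟩) h' hcol)
        (not_le.mpr hrow)
  rw [← hrc, ← hrd, fseq_rank, fseq_rank]
  exact hval

lemma seqMonomial_fseq : seqMonomial (fseq S) = ssytMonomial lam S := by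
  rw [seqMonomial, ssytMonomial, ← Finset.sum_coe_sort lam.cells
    (fun p => Finsupp.single (S p.1 p.2) 1)]
  exact (Fintype.sum_bijective (rank S) (rank_bij S)
    (fun c : Cell lam => Finsupp.single (S c.1.1 c.1.2) 1)
    (fun j => Finsupp.single (fseq S j) 1)
    (fun c => by rw [fseq_rank])).symm

end Rank

section Inv

variable {T : SemistandardYoungTableau lam}

/-- Build an SSYT from a standard tableau and a compatible weakly increasing word. -/
noncomputable def ssytOf (hT : IsStandardSyt lam T) (f : Fin lam.card → ℕ)
    (hmono : Monotone f)
    (hdes : ∀ i : ℕ, i ∈ sytDes lam T → 0 < i → ∀ h : i < lam.card,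
      f ⟨i - 1, by omega⟩ < f ⟨i, h⟩) :
    SemistandardYoungTableau lam where
  entry i j := if h : (i, j) ∈ lam then
    f (stdRank hT ⟨(i, j), (YoungDiagram.mem_cells _).mpr h⟩) else 0
  row_weak' := by
    intro i j1 j2 hj hmem
    have hmem1 : (i, j1) ∈ lam := lam.up_left_mem le_rfl hj.le hmem
    simp only [dif_pos hmem1, dif_pos hmem]
    exact hmono (show (T i j1 : ℕ) ≤ T i j2 from T.row_weak hj hmem)
  col_strict' := by
    intro i1 i2 j hi hmem
    have hmem1 : (i1, j) ∈ lam := lam.up_left_mem hi.le le_rfl hmem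
    simp only [dif_pos hmem1, dif_pos hmem]
    set c : Cell lam := ⟨(i1, j), (YoungDiagram.mem_cells _).mpr hmem1⟩
    set d : Cell lam := ⟨(i2, j), (YoungDiagram.mem_cells _).mpr hmem⟩
    have hvallt : T c.1.1 c.1.2 < T d.1.1 d.1.2 := T.col_strict hi hmem
    have hex : ∃ i, (T c.1.1 c.1.2 < i ∧ i ≤ T d.1.1 d.1.2) ∧ i ∈ sytDes lam T := by
      by_contra hcon
      push_neg at hcon
      have hcols := col_lt_col_of_no_des hT _ _ hvallt (std_val_lt hT d)
        (fun i h1 h2 => hcon i ⟨h1, h2⟩)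
      have e1 : stdCell hT ⟨T c.1.1 c.1.2, std_val_lt hT c⟩ = c := stdCell_stdRank hT c
      have e2 : stdCell hT ⟨T d.1.1 d.1.2, std_val_lt hT d⟩ = d := stdCell_stdRank hT d
      rw [e1, e2] at hcols
      exact lt_irrefl j hcols
    obtain ⟨i, ⟨hi1, hi2⟩, hides⟩ := hex
    have hbounds := (mem_sytDes.mp hides).1
    have hstep := hdes i hides (by omega) (by omega)
    have l1 : f (stdRank hT c) ≤ f ⟨i - 1, by omega⟩ :=
      hmono (show (T c.1.1 c.1.2 : ℕ) ≤ i - 1 by omega)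
    have l2 : f ⟨i, by omega⟩ ≤ f (stdRank hT d) :=
      hmono (show (i : ℕ) ≤ T d.1.1 d.1.2 from hi2)
    calc f (stdRank hT c) ≤ f ⟨i - 1, by omega⟩ := l1
      _ < f ⟨i, by omega⟩ := hstep
      _ ≤ f (stdRank hT d) := l2
  zeros' := by
    intro i j h
    simp only [dif_neg h]

variable (hT : IsStandardSyt lam T) (f : Fin lam.card → ℕ)
    (hmono : Monotone f)
    (hdes : ∀ i : ℕ, i ∈ sytDes lam T → 0 < i → ∀ h : i < lam.card,
      f ⟨i - 1, by omega⟩ < f ⟨i, h⟩)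

lemma ssytOf_entry (c : Cell lam) :
    ssytOf hT f hmono hdes c.1.1 c.1.2 = f (stdRank hT c) := by
  have h : (c.1.1, c.1.2) ∈ lam := cell_mem c
  show (ssytOf hT f hmono hdes).entry c.1.1 c.1.2 = _
  simp only [ssytOf]
  rw [dif_pos h]

lemma ssytOf_content : ssytMonomial lam (ssytOf hT f hmono hdes) = seqMonomial f := by
  rw [seqMonomial, ssytMonomial, ← Finset.sum_coe_sort lam.cells
    (fun p => Finsupp.single (ssytOf hT f hmono hdes p.1 p.2) 1)]
  exact Fintype.sum_bijective (stdRank hT) (stdRank_bij hT)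
    (fun c : Cell lam => Finsupp.single (ssytOf hT f hmono hdes c.1.1 c.1.2) 1)
    (fun j => Finsupp.single (f j) 1)
    (fun c => by rw [ssytOf_entry])

end Inv

/-- Two bijections onto `Fin n` inducing the same order are equal. -/
lemma bij_eq_of_lt {X : Type*} {n : ℕ} {φ ψ : X → Fin n}
    (hφ : Function.Bijective φ) (hψ : Function.Bijective ψ)
    (h : ∀ c d, ψ c < ψ d → φ c < φ d) : φ = ψ := by
  have hiff : ∀ c d, φ c < φ d ↔ ψ c < ψ d := by
    intro c d
    constructor
    · intro hlt
      rcases lt_trichotomy (ψ c) (ψ d) with h1 | h1 | h1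
      · exact h1
      · rw [hψ.1 h1] at hlt
        exact absurd hlt (lt_irrefl _)
      · exact absurd (h d c h1) (lt_asymm hlt)
    · exact h c d
  let e := Equiv.ofBijective ψ hψ
  have hg : StrictMono (φ ∘ e.symm) := by
    intro a b hab
    refine (hiff _ _).mpr ?_
    have ha : ψ (e.symm a) = a := e.apply_symm_apply a
    have hb : ψ (e.symm b) = b := e.apply_symm_apply b
    rw [ha, hb]
    exact hab
  have hgs : Function.Surjective (φ ∘ e.symm) := hφ.2.comp e.symm.surjective
  let iso := StrictMono.orderIsoOfSurjective _ hg hgs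
  have hiso : iso = OrderIso.refl (Fin n) := Subsingleton.elim _ _
  funext c
  have h1 : φ (e.symm (e c)) = e c := by
    have := congrArg (fun o : Fin n ≃o Fin n => o (e c)) hiso
    simpa [iso] using this
  rw [e.symm_apply_apply] at h1
  exact h1

section Round

variable (S : SemistandardYoungTableau lam)

lemma ssytOf_stdOf (hm : Monotone (fseq S))
    (hd : ∀ i : ℕ, i ∈ sytDes lam (stdOf S) → 0 < i → ∀ h : i < lam.card,
      fseq S ⟨i - 1, by omega⟩ < fseq S ⟨i, h⟩) :
    ssytOf (stdOf_std S) (fseq S) hm hd = S := by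
  ext i j
  by_cases h : (i, j) ∈ lam
  · set c : Cell lam := ⟨(i, j), (YoungDiagram.mem_cells _).mpr h⟩
    have h1 : ssytOf (stdOf_std S) (fseq S) hm hd c.1.1 c.1.2
        = fseq S (stdRank (stdOf_std S) c) := ssytOf_entry _ _ _ _ _
    have h2 : stdRank (stdOf_std S) c = rank S c := by
      apply Fin.ext
      exact stdOf_entry S c
    rw [h2, fseq_rank] at h1
    exact h1
  · rw [SemistandardYoungTableau.zeros _ h, SemistandardYoungTableau.zeros _ h]

variable {T : SemistandardYoungTableau lam} (hT : IsStandardSyt lam T)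
    (f : Fin lam.card → ℕ) (hmono : Monotone f)
    (hdes : ∀ i : ℕ, i ∈ sytDes lam T → 0 < i → ∀ h : i < lam.card,
      f ⟨i - 1, by omega⟩ < f ⟨i, h⟩)

lemma rank_ssytOf : rank (ssytOf hT f hmono hdes) = stdRank hT := by
  set S' := ssytOf hT f hmono hdes with hS'
  apply bij_eq_of_lt (rank_bij S') (stdRank_bij hT)
  intro c d hcd
  rw [rank_lt_rank_iff, key, key, Prod.Lex.lt_iff]
  have hc' : S' c.1.1 c.1.2 = f (stdRank hT c) := ssytOf_entry hT f hmono hdes c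
  have hd' : S' d.1.1 d.1.2 = f (stdRank hT d) := ssytOf_entry hT f hmono hdes d
  have hfm : f (stdRank hT c) ≤ f (stdRank hT d) := hmono hcd.le
  rcases hfm.lt_or_eq with h1 | h1
  · left
    rw [hc', hd']
    exact h1
  · right
    refine ⟨by rw [hc', hd', h1]; rfl, ?_⟩
    have hnd : ∀ i, (stdRank hT c : ℕ) < i → i ≤ (stdRank hT d : ℕ) → i ∉ sytDes lam T := by
      intro i hi1 hi2 hdes'
      have hin : i < lam.card := lt_of_le_of_lt hi2 (stdRank hT d).2
      have hst := hdes i hdes' (by omega) hin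
      have l1 : f (stdRank hT c) ≤ f ⟨i - 1, by omega⟩ :=
        hmono (show ((stdRank hT c : Fin lam.card) : ℕ) ≤ i - 1 by omega)
      have l2 : f ⟨i, hin⟩ ≤ f (stdRank hT d) := hmono (show (i : ℕ) ≤ _ from hi2)
      omega
    have hcols := col_lt_col_of_no_des hT _ _ (show (stdRank hT c : ℕ) < stdRank hT d from hcd)
      (stdRank hT d).2 hnd
    have e1 : stdCell hT ⟨(stdRank hT c : ℕ), by omega⟩ = c := stdCell_stdRank hT c
    have e2 : stdCell hT ⟨(stdRank hT d : ℕ), (stdRank hT d).2⟩ = d := stdCell_stdRank hT d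
    rwa [e1, e2] at hcols

lemma stdOf_ssytOf : stdOf (ssytOf hT f hmono hdes) = T := by
  ext i j
  by_cases h : (i, j) ∈ lam
  · set c : Cell lam := ⟨(i, j), (YoungDiagram.mem_cells _).mpr h⟩
    have h1 : stdOf (ssytOf hT f hmono hdes) c.1.1 c.1.2
        = (rank (ssytOf hT f hmono hdes) c : ℕ) := stdOf_entry _ c
    rw [rank_ssytOf hT f hmono hdes] at h1
    exact h1
  · rw [SemistandardYoungTableau.zeros _ h, SemistandardYoungTableau.zeros _ h]

lemma fseq_ssytOf : fseq (ssytOf hT f hmono hdes) = f := by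
  funext j
  obtain ⟨c, hc⟩ := (stdRank_bij hT).2 j
  have h1 : fseq (ssytOf hT f hmono hdes) (rank (ssytOf hT f hmono hdes) c)
      = ssytOf hT f hmono hdes c.1.1 c.1.2 := fseq_rank _ c
  rw [rank_ssytOf hT f hmono hdes, hc, ssytOf_entry hT f hmono hdes c, hc] at h1
  exact h1

end Round

section Count

variable (lam)

/-- The fiber of standardization over a standard tableau with fixed content. -/
abbrev Fib (T : SemistandardYoungTableau lam) (α : ℕ →₀ ℕ) : Type :=
  {f : Fin lam.card → ℕ // Monotone f ∧
    (∀ i : ℕ, i ∈ sytDes lam T → 0 < i → ∀ h : i < lam.card,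
      f ⟨i - 1, by omega⟩ < f ⟨i, h⟩) ∧
    seqMonomial f = α}

abbrev Std : Type := {T : SemistandardYoungTableau lam // IsStandardSyt lam T}

variable {lam}

lemma seq_mem_support {n : ℕ} {f : Fin n → ℕ} {α : ℕ →₀ ℕ}
    (h : seqMonomial f = α) (j : Fin n) : f j ∈ α.support := by
  rw [Finsupp.mem_support_iff, ← h, seqMonomial]
  intro hcon
  rw [Finsupp.finset_sum_apply] at hcon
  have := (Finset.sum_eq_zero_iff.mp hcon) j (Finset.mem_univ j)
  rw [Finsupp.single_eq_same] at this
  exact one_ne_zero this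

lemma fib_finite (T : SemistandardYoungTableau lam) (α : ℕ →₀ ℕ) : Finite (Fib lam T α) := by
  apply Finite.of_injective
    (fun F : Fib lam T α => (fun j => (⟨F.1 j, seq_mem_support F.2.2.2 j⟩ : α.support)))
  intro F G h
  apply Subtype.ext
  funext j
  exact congrArg Subtype.val (congrFun h j)

lemma ssyt_mem_support {S : SemistandardYoungTableau lam} {α : ℕ →₀ ℕ}
    (h : ssytMonomial lam S = α) (c : Cell lam) : S c.1.1 c.1.2 ∈ α.support := by
  rw [Finsupp.mem_support_iff, ← h, ssytMonomial]
  intro hcon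
  rw [Finsupp.finset_sum_apply] at hcon
  have := (Finset.sum_eq_zero_iff.mp hcon) c.1 c.2
  rw [Finsupp.single_eq_same] at this
  exact one_ne_zero this

lemma ssyt_ext_of_cells {S S' : SemistandardYoungTableau lam}
    (h : ∀ c : Cell lam, S c.1.1 c.1.2 = S' c.1.1 c.1.2) : S = S' := by
  ext i j
  by_cases hm : (i, j) ∈ lam
  · exact h ⟨(i, j), (YoungDiagram.mem_cells _).mpr hm⟩
  · rw [SemistandardYoungTableau.zeros _ hm, SemistandardYoungTableau.zeros _ hm]

lemma ssyt_content_finite (α : ℕ →₀ ℕ) :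
    Finite {S : SemistandardYoungTableau lam // ssytMonomial lam S = α} := by
  apply Finite.of_injective
    (fun P : {S : SemistandardYoungTableau lam // ssytMonomial lam S = α} =>
      (fun c : Cell lam => (⟨P.1 c.1.1 c.1.2, ssyt_mem_support P.2 c⟩ : α.support)))
  intro P Q h
  apply Subtype.ext
  apply ssyt_ext_of_cells
  intro c
  exact congrArg Subtype.val (congrFun h c)

lemma std_finite : Finite (Std lam) := by
  apply Finite.of_injective (fun P : Std lam => stdRank P.2)
  intro P Q h
  apply Subtype.ext
  apply ssyt_ext_of_cells
  intro c
  have h1 : (stdRank P.2 c : ℕ) = (stdRank Q.2 c : ℕ) :=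
    congrArg Fin.val (congrFun h c)
  exact h1

lemma sigma_eq_of {ι : Type*} {X : Type*} {P : ι → X → Prop}
    {a b : ι} {x : {x // P a x}} {y : {x // P b x}}
    (h1 : a = b) (h2 : x.1 = y.1) :
    (⟨a, x⟩ : Σ i, {x // P i x}) = ⟨b, y⟩ := by
  subst h1
  exact congrArg _ (Subtype.ext h2)

/-- The standardization equivalence. -/
noncomputable def mainEquiv (α : ℕ →₀ ℕ) :
    {S : SemistandardYoungTableau lam // ssytMonomial lam S = α} ≃
      Σ T : Std lam, Fib lam T.1 α where
  toFun P := ⟨⟨stdOf P.1, stdOf_std P.1⟩, fseq P.1, fseq_mono P.1, fseq_strict_at_des P.1,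
    by rw [seqMonomial_fseq]; exact P.2⟩
  invFun Q := ⟨ssytOf Q.1.2 Q.2.1 Q.2.2.1 Q.2.2.2.1,
    by rw [ssytOf_content]; exact Q.2.2.2.2⟩
  left_inv P := Subtype.ext (ssytOf_stdOf P.1 (fseq_mono P.1) (fseq_strict_at_des P.1))
  right_inv := by
    rintro ⟨Tsub, fsub⟩
    refine sigma_eq_of (P := fun (T : Std lam) (f : Fin lam.card → ℕ) => Monotone f ∧
      (∀ i : ℕ, i ∈ sytDes lam T.1 → 0 < i → ∀ h : i < lam.card,
        f ⟨i - 1, by omega⟩ < f ⟨i, h⟩) ∧ seqMonomial f = α) ?_ ?_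
    · exact Subtype.ext (stdOf_ssytOf Tsub.2 fsub.1 fsub.2.1 fsub.2.2.1)
    · exact fseq_ssytOf Tsub.2 fsub.1 fsub.2.1 fsub.2.2.1

lemma nat_card_sigma {ι : Type*} [Fintype ι] (F : ι → Type*) [∀ i, Finite (F i)] :
    Nat.card (Σ i, F i) = ∑ i, Nat.card (F i) := by
  letI : ∀ i, Fintype (F i) := fun i => Fintype.ofFinite _
  simp only [Nat.card_eq_fintype_card, Fintype.card_sigma]

end Count

end Syt16


/-- For any partition `λ` of `n`, the quasisymmetric generating
function of standard Young tableaux of shape `λ` by descents equals the Schur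
function: `Σ_T Q_{Des(T)} = s_λ`. -/
theorem syt_qsym_generating_function_eq_schur (lam : YoungDiagram) :
    (∑ᶠ T ∈ {T : SemistandardYoungTableau lam | IsStandardSyt lam T},
      fundamentalQSym lam.card (sytDes lam T)) = schurFunction lam := by
  classical
  have hstd : Finite (Syt16.Std lam) := Syt16.std_finite
  have hfin : {T : SemistandardYoungTableau lam | IsStandardSyt lam T}.Finite :=
    Set.finite_coe_iff.mp hstd
  rw [finsum_mem_eq_finite_toFinset_sum _ hfin]
  apply MvPowerSeries.ext
  intro α
  rw [map_sum]
  have hcoe : ∀ T : SemistandardYoungTableau lam,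
      MvPowerSeries.coeff α (fundamentalQSym lam.card (sytDes lam T))
        = (Nat.card (Syt16.Fib lam T α) : ℤ) := fun T => rfl
  have hcoe2 : MvPowerSeries.coeff α (schurFunction lam)
      = (Nat.card {S : SemistandardYoungTableau lam // ssytMonomial lam S = α} : ℤ) := rfl
  rw [hcoe2]
  simp only [hcoe]
  rw [← Nat.cast_sum]
  refine congrArg _ ?_
  haveI : ∀ T : Syt16.Std lam, Finite (Syt16.Fib lam T.1 α) := fun T => Syt16.fib_finite _ _
  letI : Fintype (Syt16.Std lam) := Fintype.ofFinite _
  let e2 : {T : SemistandardYoungTableau lam // T ∈ hfin.toFinset} ≃ Syt16.Std lam :=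
    Equiv.subtypeEquivRight (fun T => by rw [Set.Finite.mem_toFinset]; exact Iff.rfl)
  calc ∑ T ∈ hfin.toFinset, Nat.card (Syt16.Fib lam T α)
      = ∑ T : hfin.toFinset, Nat.card (Syt16.Fib lam (T : SemistandardYoungTableau lam) α) :=
        (Finset.sum_coe_sort _ _).symm
    _ = ∑ T : Syt16.Std lam, Nat.card (Syt16.Fib lam T.1 α) :=
        Fintype.sum_bijective e2 e2.bijective _ _ (fun x => rfl)
    _ = Nat.card (Σ T : Syt16.Std lam, Syt16.Fib lam T.1 α) :=
        (Syt16.nat_card_sigma _).symm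
    _ = Nat.card {S : SemistandardYoungTableau lam // ssytMonomial lam S = α} :=
        (Nat.card_congr (Syt16.mainEquiv α)).symm

end
end
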